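/- arXiv:math/9911234 — 3 statements merged into one kernel-verified Lean document; each statement's English description precedes it below -/
import Mathlib

section
/- Let R ⊆ Z ⊆ T with T a prime affine k-algebra finite over its center Z (an affine domain) and Z finite over the affine subalgebra R. For a maximal ideal m of R, the primitive central idempotents of T/mT are precisely the images of the primitive idempotents of Z/mZ; consequently the blocks of T/mT are in bijection with the maximal ideals of Z lying over m. -/
/-- A primitive idempotent of a commutative ring: a nonzero idempotent which is not the sum
of two nonzero orthogonal idempotents. -/
def IsPrimitiveIdempotent {B : Type*} [CommRing B] (f : B) : Prop :=
  IsIdempotentElem f ∧ f ≠ 0 ∧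
    ∀ a b : B, IsIdempotentElem a → IsIdempotentElem b → a * b = 0 → a + b = f →
      a = 0 ∨ b = 0

/-- A primitive central idempotent of a (possibly noncommutative) ring: a nonzero central
idempotent which is not the sum of two nonzero orthogonal central idempotents. -/
def IsPrimitiveCentralIdempotent {A : Type*} [Ring A] (e : A) : Prop :=
  IsIdempotentElem e ∧ e ∈ Set.center A ∧ e ≠ 0 ∧
    ∀ a b : A, IsIdempotentElem a → IsIdempotentElem b → a ∈ Set.center A → b ∈ Set.center A →
      a * b = 0 → a + b = e → a = 0 ∨ b = 0

section SmulTop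
variable {Z T : Type*} [CommRing Z] [Ring T] [Algebra Z T]

lemma smulTop_mul_left (P : Ideal Z) (t : T) {w : T} (hw : w ∈ P • (⊤ : Submodule Z T)) :
    t * w ∈ P • (⊤ : Submodule Z T) := by
  refine Submodule.smul_induction_on hw (fun r hr n _ => ?_) (fun a b ha hb => ?_)
  · rw [mul_smul_comm]
    exact Submodule.smul_mem_smul hr trivial
  · rw [mul_add]; exact Submodule.add_mem _ ha hb

lemma smulTop_mul_right (P : Ideal Z) (t : T) {w : T} (hw : w ∈ P • (⊤ : Submodule Z T)) :
    w * t ∈ P • (⊤ : Submodule Z T) := by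
  refine Submodule.smul_induction_on hw (fun r hr n _ => ?_) (fun a b ha hb => ?_)
  · rw [smul_mul_assoc]
    exact Submodule.smul_mem_smul hr trivial
  · rw [add_mul]; exact Submodule.add_mem _ ha hb

lemma mul_mem_smulTop {P Q : Ideal Z} {a b : T} (ha : a ∈ P • (⊤ : Submodule Z T))
    (hb : b ∈ Q • (⊤ : Submodule Z T)) : a * b ∈ (P * Q) • (⊤ : Submodule Z T) := by
  rw [mul_smul]
  refine Submodule.smul_induction_on ha (fun r hr n _ => ?_) (fun x y hx hy => ?_)
  · rw [smul_mul_assoc]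
    exact Submodule.smul_mem_smul hr (smulTop_mul_left Q n hb)
  · rw [add_mul]; exact Submodule.add_mem _ hx hy

lemma pow_mul_mem_smulTop {I : Ideal Z} {n : ℕ} {a b : T}
    (ha : a ∈ I ^ n • (⊤ : Submodule Z T)) (hb : b ∈ I ^ n • (⊤ : Submodule Z T)) :
    a * b ∈ I ^ (2 * n) • (⊤ : Submodule Z T) := by
  rw [two_mul, pow_add]
  exact mul_mem_smulTop ha hb

/-- commutator improvement -/
lemma comm_mem_smulTop {I : Ideal Z} {n : ℕ} {u : T}
    (hk : ∀ x : T, u * x - x * u ∈ I ^ n • (⊤ : Submodule Z T)) {w : T}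
    (hw : w ∈ I ^ n • (⊤ : Submodule Z T)) :
    w * u - u * w ∈ I ^ (2 * n) • (⊤ : Submodule Z T) := by
  rw [two_mul, pow_add, mul_smul]
  refine Submodule.smul_induction_on hw (fun r hr m _ => ?_) (fun x y hx hy => ?_)
  · have : (r • m) * u - u * (r • m) = r • (m * u - u * m) := by
      rw [smul_sub, smul_mul_assoc, mul_smul_comm]
    rw [this]
    refine Submodule.smul_mem_smul hr ?_
    have := hk m
    have h2 : m * u - u * m = -(u * m - m * u) := by abel
    rw [h2]
    exact Submodule.neg_mem _ this
  · have : (x + y) * u - u * (x + y) = (x * u - u * x) + (y * u - u * y) := by noncomm_ring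
    rw [this]; exact Submodule.add_mem _ hx hy

lemma newton_step {I : Ideal Z} {n : ℕ} {u : T}
    (hc : u * u - u ∈ I ^ n • (⊤ : Submodule Z T))
    (hk : ∀ x : T, u * x - x * u ∈ I ^ n • (⊤ : Submodule Z T)) :
    ∃ u' : T, u' - u ∈ I ^ n • (⊤ : Submodule Z T) ∧
      u' * u' - u' ∈ I ^ (2 * n) • (⊤ : Submodule Z T) ∧
      ∀ x : T, u' * x - x * u' ∈ I ^ (2 * n) • (⊤ : Submodule Z T) := by
  set c := u * u - u with hcdef
  refine ⟨u + c * (1 - 2 * u), by simpa using smulTop_mul_right _ _ hc, ?_, ?_⟩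
  · have hid : (u + c * (1 - 2 * u)) * (u + c * (1 - 2 * u)) - (u + c * (1 - 2 * u))
        = (c * c) * ((1 - 2 * u) * (1 - 2 * u) - 4) := by
      rw [hcdef]; noncomm_ring
    rw [hid]
    exact smulTop_mul_right _ _ (pow_mul_mem_smulTop hc hc)
  · intro x
    set k := u * x - x * u with hkdef
    set δ := k * u - u * k with hddef
    have hδ : δ ∈ I ^ (2 * n) • (⊤ : Submodule Z T) := comm_mem_smulTop hk (hk x)
    have hid : (u + c * (1 - 2 * u)) * x - x * (u + c * (1 - 2 * u))
        = (-6) * (c * k) + 3 * δ - 4 * (u * δ) - 2 * (δ * u) := by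
      rw [hddef, hkdef, hcdef]; noncomm_ring
    rw [hid]
    refine Submodule.sub_mem _ (Submodule.sub_mem _ (Submodule.add_mem _ ?_ ?_) ?_) ?_
    · exact smulTop_mul_left _ _ (pow_mul_mem_smulTop hc (hk x))
    · exact smulTop_mul_left _ _ hδ
    · exact smulTop_mul_left _ _ (smulTop_mul_left _ _ hδ)
    · exact smulTop_mul_left _ _ (smulTop_mul_right _ _ hδ)

lemma newton_iter {I : Ideal Z} {t : T}
    (h1 : t * t - t ∈ I • (⊤ : Submodule Z T))
    (h2 : ∀ x : T, t * x - x * t ∈ I • (⊤ : Submodule Z T)) (n : ℕ) (hn : 1 ≤ n) :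
    ∃ u : T, u - t ∈ I • (⊤ : Submodule Z T) ∧
      u * u - u ∈ I ^ n • (⊤ : Submodule Z T) ∧
      ∀ x : T, u * x - x * u ∈ I ^ n • (⊤ : Submodule Z T) := by
  induction n, hn using Nat.le_induction with
  | base => exact ⟨t, by simpa using Submodule.zero_mem _, by simpa using h1, by simpa using h2⟩
  | succ n hn ih =>
    obtain ⟨u, hu1, hu2, hu3⟩ := ih
    obtain ⟨u', hu'1, hu'2, hu'3⟩ := newton_step hu2 hu3
    have hle : I ^ (2 * n) • (⊤ : Submodule Z T) ≤ I ^ (n + 1) • (⊤ : Submodule Z T) :=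
      Submodule.smul_mono_left (Ideal.pow_le_pow_right (by omega))
    have hle1 : I ^ n • (⊤ : Submodule Z T) ≤ I • (⊤ : Submodule Z T) :=
      Submodule.smul_mono_left (Ideal.pow_le_self (by omega))
    refine ⟨u', ?_, hle hu'2, fun x => hle (hu'3 x)⟩
    have : u' - t = (u' - u) + (u - t) := by abel
    rw [this]
    exact Submodule.add_mem _ (hle1 hu'1) hu1
end SmulTop


section ULiftAR
universe u v
variable {R : Type u} {M : Type v} [CommRing R] [AddCommGroup M] [Module R M]

/-- Lift a submodule to the `ULift`ed module over the `ULift`ed ring. -/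
def uliftSubmodule (N : Submodule R M) : Submodule (ULift.{v} R) (ULift.{u} M) where
  carrier := {m | m.down ∈ N}
  add_mem' ha hb := N.add_mem ha hb
  zero_mem' := N.zero_mem
  smul_mem' r' m hm := N.smul_mem r'.down hm

lemma mem_uliftSubmodule {N : Submodule R M} {m : ULift.{u} M} :
    m ∈ uliftSubmodule N ↔ m.down ∈ N := Iff.rfl

lemma uliftSubmodule_inj {A B : Submodule R M} (h : uliftSubmodule A = uliftSubmodule B) :
    A = B := by
  ext x
  constructor <;> intro hx
  · exact (mem_uliftSubmodule (N := B) (m := ULift.up x)).mp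
      (h ▸ (mem_uliftSubmodule (N := A) (m := ULift.up x)).mpr hx)
  · exact (mem_uliftSubmodule (N := A) (m := ULift.up x)).mp
      (h.symm ▸ (mem_uliftSubmodule (N := B) (m := ULift.up x)).mpr hx)

lemma uliftSubmodule_inf (A B : Submodule R M) :
    uliftSubmodule (A ⊓ B) = uliftSubmodule A ⊓ uliftSubmodule B := rfl

lemma uliftSubmodule_top : uliftSubmodule (⊤ : Submodule R M) = ⊤ := rfl

lemma uliftSubmodule_smul (J : Ideal R) (N : Submodule R M) :
    uliftSubmodule (J • N) =
      Ideal.map ((ULift.ringEquiv (R := R)).symm : R →+* ULift.{v} R) J • uliftSubmodule N := by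
  apply le_antisymm
  · intro m' hm'
    have key : ∀ y ∈ J • N, (ULift.up y : ULift.{u} M) ∈
        Ideal.map ((ULift.ringEquiv (R := R)).symm : R →+* ULift.{v} R) J • uliftSubmodule N := by
      intro y hy
      refine Submodule.smul_induction_on hy (fun r hr n hn => ?_) (fun a b ha hb => ?_)
      · exact Submodule.smul_mem_smul (Ideal.mem_map_of_mem _ hr)
          ((mem_uliftSubmodule (m := ULift.up n)).mpr hn)
      · exact Submodule.add_mem _ ha hb
    exact key m'.down hm'
  · intro m' hm'
    refine Submodule.smul_induction_on hm' (fun r' hr' n' hn' => ?_) (fun a b ha hb => ?_)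
    · obtain ⟨r, hr, rfl⟩ := Ideal.mem_map_iff_of_surjective _
        (ULift.ringEquiv (R := R)).symm.surjective |>.mp hr'
      exact Submodule.smul_mem_smul hr hn'
    · exact Submodule.add_mem _ ha hb

/-- Universe-polymorphic **Artin-Rees lemma**. -/
theorem artinRees_poly [IsNoetherianRing R] [Module.Finite R M] (I : Ideal R)
    (N : Submodule R M) :
    ∃ k : ℕ, ∀ n ≥ k, I ^ n • (⊤ : Submodule R M) ⊓ N = I ^ (n - k) • (I ^ k • ⊤ ⊓ N) := by
  letI : IsNoetherianRing (ULift.{v} R) :=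
    isNoetherianRing_of_ringEquiv R (ULift.ringEquiv (R := R)).symm
  haveI : Module.Finite (ULift.{v} R) (ULift.{u} M) := by
    obtain ⟨s, hs⟩ := Module.Finite.fg_top (R := R) (M := M)
    classical
    refine ⟨⟨s.image ULift.up, ?_⟩⟩
    rw [eq_top_iff]
    rintro ⟨x⟩ -
    have hx : x ∈ Submodule.span R (s : Set M) := hs ▸ Submodule.mem_top
    have key : ∀ y ∈ Submodule.span R (s : Set M),
        (ULift.up y : ULift.{u} M) ∈ Submodule.span (ULift.{v} R) ↑(s.image ULift.up) := by
      intro y hy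
      induction hy using Submodule.span_induction with
      | mem w hw =>
        refine Submodule.subset_span ?_
        simp only [Finset.coe_image, Set.mem_image, Finset.mem_coe]
        exact ⟨w, hw, rfl⟩
      | zero => exact Submodule.zero_mem _
      | add a b _ _ ha hb => exact Submodule.add_mem _ ha hb
      | smul r a _ ha => exact Submodule.smul_mem _ (ULift.up r) ha
    exact key x hx
  set e : R →+* ULift.{v} R := ((ULift.ringEquiv (R := R)).symm : R →+* ULift.{v} R)
  obtain ⟨k, hk⟩ := Ideal.exists_pow_inf_eq_pow_smul (Ideal.map e I) (uliftSubmodule N)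
  refine ⟨k, fun n hn => ?_⟩
  apply uliftSubmodule_inj (R := R) (M := M)
  rw [uliftSubmodule_inf, uliftSubmodule_smul, uliftSubmodule_smul, uliftSubmodule_inf,
    uliftSubmodule_smul, uliftSubmodule_top, Ideal.map_pow, Ideal.map_pow, Ideal.map_pow]
  exact hk n hn
end ULiftAR

section JQuot
variable {Z T : Type*} [CommRing Z] [Ring T] [Algebra Z T] (I : Ideal Z)

/-- The two-sided ideal with carrier `I • ⊤`. -/
def Jmod : TwoSidedIdeal T :=
  TwoSidedIdeal.mk' (↑(I • (⊤ : Submodule Z T)) : Set T)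
    (Submodule.zero_mem _) (fun hx hy => Submodule.add_mem _ hx hy)
    (fun hx => Submodule.neg_mem _ hx)
    (fun hy => smulTop_mul_left I _ hy)
    (fun hx => smulTop_mul_right I _ hx)

lemma mem_span_iff_smulTop (x : T) :
    x ∈ TwoSidedIdeal.span (algebraMap Z T '' (I : Set Z)) ↔ x ∈ I • (⊤ : Submodule Z T) := by
  constructor
  · intro hx
    rw [TwoSidedIdeal.mem_span_iff] at hx
    have := hx (Jmod I) ?_
    · rwa [Jmod, TwoSidedIdeal.mem_mk'] at this
    · rintro _ ⟨z, hz, rfl⟩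
      rw [SetLike.mem_coe, Jmod, TwoSidedIdeal.mem_mk', SetLike.mem_coe,
        Algebra.algebraMap_eq_smul_one]
      exact Submodule.smul_mem_smul hz trivial
  · intro hx
    refine Submodule.smul_induction_on hx (fun r hr n _ => ?_)
      (fun a b ha hb => TwoSidedIdeal.add_mem _ ha hb)
    rw [Algebra.smul_def]
    exact TwoSidedIdeal.mul_mem_right _ _ _ (TwoSidedIdeal.subset_span ⟨r, hr, rfl⟩)

lemma mk'_eq_zero_iff (x : T) :
    (RingCon.mk' (TwoSidedIdeal.span (algebraMap Z T '' (I : Set Z))).ringCon) x = 0 ↔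
      x ∈ I • (⊤ : Submodule Z T) := by
  rw [← mem_span_iff_smulTop]
  constructor
  · intro h
    have h2 : (TwoSidedIdeal.span (algebraMap Z T '' (I : Set Z))).ringCon x 0 := (RingCon.eq _).mp h
    rw [TwoSidedIdeal.rel_iff] at h2
    simpa using h2
  · intro h
    exact (RingCon.eq _).mpr ((TwoSidedIdeal.rel_iff _ _ _).mpr (by simpa using h))

lemma mk'_surj : Function.Surjective
    (RingCon.mk' (TwoSidedIdeal.span (algebraMap Z T '' (I : Set Z))).ringCon) :=
  fun q => Quot.inductionOn q fun t => ⟨t, rfl⟩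

lemma image_central (z : Z) :
    (RingCon.mk' (TwoSidedIdeal.span (algebraMap Z T '' (I : Set Z))).ringCon)
      (algebraMap Z T z) ∈ Set.center
        (TwoSidedIdeal.span (algebraMap Z T '' (I : Set Z))).ringCon.Quotient := by
  rw [Semigroup.mem_center_iff]
  intro q
  obtain ⟨t, rfl⟩ := mk'_surj I q
  rw [← map_mul, ← map_mul, Algebra.commutes]

lemma central_approx [IsNoetherianRing Z] [Module.Finite Z T]
    (hcenter : ∀ t : T, t ∈ Set.center T ↔ ∃ z : Z, algebraMap Z T z = t) :
    ∃ c : ℕ, ∀ n, c ≤ n → ∀ u : T, (∀ x, u * x - x * u ∈ I ^ n • (⊤ : Submodule Z T)) →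
      ∃ z : Z, u - algebraMap Z T z ∈ I ^ (n - c) • (⊤ : Submodule Z T) := by
  obtain ⟨r, x, hx⟩ := Module.Finite.exists_fin (R := Z) (M := T)
  let φ : T →ₗ[Z] (Fin r → T) :=
    LinearMap.pi fun i => LinearMap.mulRight Z (x i) - LinearMap.mulLeft Z (x i)
  obtain ⟨c, hc⟩ := artinRees_poly I (LinearMap.range φ : Submodule Z (Fin r → T))
  refine ⟨c, fun n hn u hu => ?_⟩
  have hker : ∀ t : T, φ t = 0 → ∃ z, algebraMap Z T z = t := by
    intro t ht
    refine (hcenter t).mp (Semigroup.mem_center_iff.mpr fun g => ?_)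
    have hg : g ∈ Submodule.span Z (Set.range x) := hx ▸ Submodule.mem_top
    induction hg using Submodule.span_induction with
    | mem w hw =>
      obtain ⟨i, rfl⟩ := hw
      have := congrFun ht i
      simp only [φ, LinearMap.pi_apply, LinearMap.sub_apply, LinearMap.mulRight_apply,
        LinearMap.mulLeft_apply, Pi.zero_apply] at this
      linear_combination (norm := noncomm_ring) -this
    | zero => simp
    | add a b _ _ ha hb => rw [add_mul, mul_add, ha, hb]
    | smul z a _ ha => rw [smul_mul_assoc, mul_smul_comm, ha]
  have hmem : φ u ∈ I ^ n • (⊤ : Submodule Z (Fin r → T)) ⊓ LinearMap.range φ := by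
    constructor
    · rw [← Finset.univ_sum_single (φ u)]
      refine Submodule.sum_mem _ fun i _ => ?_
      have hcomp : φ u i ∈ I ^ n • (⊤ : Submodule Z T) := hu (x i)
      have : Pi.single i (φ u i) ∈ Submodule.map (LinearMap.single Z (fun _ : Fin r => T) i)
          (I ^ n • (⊤ : Submodule Z T)) := ⟨φ u i, hcomp, rfl⟩
      rw [Submodule.map_smul''] at this
      exact Submodule.smul_mono le_rfl le_top this
    · exact ⟨u, rfl⟩
  rw [hc n hn] at hmem
  have h2 : φ u ∈ I ^ (n - c) • (LinearMap.range φ : Submodule Z (Fin r → T)) :=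
    Submodule.smul_mono le_rfl inf_le_right hmem
  rw [← Submodule.map_top, ← Submodule.map_smul''] at h2
  obtain ⟨u₂, hu₂, hphi⟩ := h2
  obtain ⟨z, hz⟩ := hker (u - u₂) (by rw [map_sub, hphi, sub_self])
  refine ⟨z, ?_⟩
  rw [hz]
  simpa using hu₂

lemma ideal_pullback [IsNoetherianRing Z] [Module.Finite Z T]
    (hinj : Function.Injective (algebraMap Z T)) :
    ∃ c : ℕ, ∀ n, c ≤ n → ∀ z : Z, algebraMap Z T z ∈ I ^ n • (⊤ : Submodule Z T) →
      z ∈ I ^ (n - c) := by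
  obtain ⟨c, hc⟩ := artinRees_poly I (LinearMap.range (Algebra.linearMap Z T) : Submodule Z T)
  refine ⟨c, fun n hn z hz => ?_⟩
  have hmem : algebraMap Z T z ∈ I ^ n • (⊤ : Submodule Z T) ⊓
      LinearMap.range (Algebra.linearMap Z T) := ⟨hz, ⟨z, rfl⟩⟩
  rw [hc n hn] at hmem
  have h2 : algebraMap Z T z ∈ I ^ (n - c) • LinearMap.range (Algebra.linearMap Z T) :=
    Submodule.smul_mono le_rfl inf_le_right hmem
  have h3 : ∀ w ∈ I ^ (n - c) • LinearMap.range (Algebra.linearMap Z T),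
      ∃ y ∈ I ^ (n - c), algebraMap Z T y = w := by
    intro w hw
    refine Submodule.smul_induction_on hw ?_ ?_
    · rintro r hr _ ⟨y, rfl⟩
      exact ⟨r * y, Ideal.mul_mem_right _ _ hr,
        by rw [map_mul, ← Algebra.smul_def]; rfl⟩
    · rintro a b ⟨y1, hy1, rfl⟩ ⟨y2, hy2, rfl⟩
      exact ⟨y1 + y2, Ideal.add_mem _ hy1 hy2, by rw [map_add]⟩
  obtain ⟨y, hy, hyz⟩ := h3 _ h2
  rwa [← hinj hyz]
end JQuot

section Main
variable {Z T : Type*} [CommRing Z] [Ring T] [Algebra Z T] (I : Ideal Z)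

lemma exists_idem_preimage [IsNoetherianRing Z] [Module.Finite Z T]
    (hinj : Function.Injective (algebraMap Z T))
    (hcenter : ∀ t : T, t ∈ Set.center T ↔ ∃ z : Z, algebraMap Z T z = t)
    (ε : (TwoSidedIdeal.span (algebraMap Z T '' (I : Set Z))).ringCon.Quotient)
    (hidem : IsIdempotentElem ε) (hcent : ε ∈ Set.center _) :
    ∃ z : Z, IsIdempotentElem (Ideal.Quotient.mk I z) ∧
      (RingCon.mk' (TwoSidedIdeal.span (algebraMap Z T '' (I : Set Z))).ringCon)
        (algebraMap Z T z) = ε := by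
  obtain ⟨t, rfl⟩ := mk'_surj I ε
  set π := RingCon.mk' (TwoSidedIdeal.span (algebraMap Z T '' (I : Set Z))).ringCon with hπ
  have h1 : t * t - t ∈ I • (⊤ : Submodule Z T) := by
    rw [← mk'_eq_zero_iff, map_sub, map_mul]
    rw [show π t * π t = π t from hidem, sub_self]
  have h2 : ∀ x : T, t * x - x * t ∈ I • (⊤ : Submodule Z T) := by
    intro x
    rw [← mk'_eq_zero_iff, map_sub, map_mul, map_mul,
      show π x * π t = π t * π x from (Semigroup.mem_center_iff.mp hcent) (π x), sub_self]
  obtain ⟨c₁, hc₁⟩ := central_approx I hcenter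
  obtain ⟨c₂, hc₂⟩ := ideal_pullback I hinj
  set n := c₁ + c₂ + 2 with hn
  obtain ⟨u, hu1, hu2, hu3⟩ := newton_iter h1 h2 n (by omega)
  obtain ⟨z, hz⟩ := hc₁ n (by omega) u hu3
  set w := u - algebraMap Z T z with hw
  have hzz : algebraMap Z T (z * z - z) ∈ I ^ (n - c₁) • (⊤ : Submodule Z T) := by
    have hle : I ^ n • (⊤ : Submodule Z T) ≤ I ^ (n - c₁) • ⊤ :=
      Submodule.smul_mono (Ideal.pow_le_pow_right (by omega)) le_rfl
    have hexp : algebraMap Z T (z * z - z) =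
        (u * u - u) - u * w - w * u + w * w + w := by
      rw [map_sub, map_mul, hw]; noncomm_ring
    rw [hexp]
    refine Submodule.add_mem _ (Submodule.add_mem _ (Submodule.sub_mem _
      (Submodule.sub_mem _ (hle hu2) ?_) ?_) ?_) hz
    · exact smulTop_mul_left _ _ hz
    · exact smulTop_mul_right _ _ hz
    · exact smulTop_mul_left _ _ hz
  have hzz2 : z * z - z ∈ I := by
    have h := hc₂ (n - c₁) (by omega) _ hzz
    exact Ideal.pow_le_self (by omega) h
  have hwI : w ∈ I • (⊤ : Submodule Z T) :=
    Submodule.smul_mono (Ideal.pow_le_self (by omega)) le_rfl hz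
  have hut : u - t ∈ I • (⊤ : Submodule Z T) := hu1
  refine ⟨z, ?_, ?_⟩
  · have h0 : Ideal.Quotient.mk I (z * z - z) = 0 := Ideal.Quotient.eq_zero_iff_mem.mpr hzz2
    rw [map_sub, map_mul, sub_eq_zero] at h0
    exact h0
  · have hπw : π w = 0 := (mk'_eq_zero_iff I w).mpr hwI
    have hπut : π (u - t) = 0 := (mk'_eq_zero_iff I _).mpr hut
    have : algebraMap Z T z = u - w := by rw [hw, sub_sub_cancel]
    rw [this, map_sub, hπw, sub_zero]
    rw [map_sub, sub_eq_zero] at hπut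
    exact hπut
end Main

section Ker
variable {R Z T : Type*} [CommRing R] [CommRing Z] [Ring T] [Algebra Z T] [Algebra R Z]
variable (m : Ideal R)

lemma ker_nil [Module.Finite Z T] [Module.Finite R Z] (hm : m.IsMaximal)
    (hinjZT : Function.Injective (algebraMap Z T)) (z : Z)
    (hz0 : (RingCon.mk' (TwoSidedIdeal.span (algebraMap Z T ''
        ((m.map (algebraMap R Z)) : Set Z))).ringCon) (algebraMap Z T z) = 0) :
    IsNilpotent (Ideal.Quotient.mk (m.map (algebraMap R Z)) z) := by
  set I := m.map (algebraMap R Z) with hI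
  have hzJ : algebraMap Z T z ∈ I • (⊤ : Submodule Z T) := (mk'_eq_zero_iff I _).mp hz0
  have key : ∀ M : Ideal Z, M.IsMaximal → I ≤ M → z ∈ M := by
    intro M hM hIM
    by_contra hzM
    obtain ⟨w, s, hsM, hws⟩ := hM.exists_inv hzM
    have hT1 : (1 : T) ∈ M • (⊤ : Submodule Z T) := by
      have h1 : (1 : T) = algebraMap Z T s + algebraMap Z T w * algebraMap Z T z := by
        rw [← map_mul, ← map_add]
        rw [show s + w * z = 1 by rw [add_comm]; exact hws, map_one]
      rw [h1]
      refine Submodule.add_mem _ ?_ (smulTop_mul_left _ _ (Submodule.smul_mono hIM le_rfl hzJ))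
      rw [Algebra.algebraMap_eq_smul_one]
      exact Submodule.smul_mem_smul hsM trivial
    have htop : (⊤ : Submodule Z T) ≤ M • ⊤ := by
      intro t _
      rw [show t = t * 1 from (mul_one t).symm]
      exact smulTop_mul_left _ _ hT1
    obtain ⟨r, hr1, hr0⟩ := Submodule.exists_sub_one_mem_and_smul_eq_zero_of_fg_of_le_smul M
      (⊤ : Submodule Z T) Module.Finite.fg_top htop
    have hr : r = 0 := by
      apply hinjZT
      rw [map_zero, Algebra.algebraMap_eq_smul_one]
      exact hr0 1 trivial
    rw [hr, zero_sub] at hr1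
    exact hM.ne_top ((Ideal.eq_top_iff_one M).mpr (by simpa using M.neg_mem hr1))
  rw [← mem_nilradical, nilradical_eq_sInf]
  refine Ideal.mem_sInf.mpr ?_
  intro P hP
  haveI : P.IsPrime := hP
  set P' := P.comap (Ideal.Quotient.mk I) with hP'
  haveI hP'prime : P'.IsPrime := Ideal.IsPrime.comap _
  have hIP' : I ≤ P' := fun y hy => by
    rw [hP', Ideal.mem_comap, Ideal.Quotient.eq_zero_iff_mem.mpr hy]
    exact P.zero_mem
  have hcomapR : (P'.comap (algebraMap R Z)).IsMaximal := by
    have hle : m ≤ P'.comap (algebraMap R Z) := by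
      intro r hr
      rw [Ideal.mem_comap]
      exact hIP' (Ideal.mem_map_of_mem _ hr)
    have hne : P'.comap (algebraMap R Z) ≠ ⊤ := by
      intro htop'
      refine hP'prime.ne_top ((Ideal.eq_top_iff_one P').mpr ?_)
      have : (1 : R) ∈ P'.comap (algebraMap R Z) := htop' ▸ trivial
      rw [Ideal.mem_comap, map_one] at this
      exact this
    rw [← hm.eq_of_le hne hle]
    exact hm
  haveI : Algebra.IsIntegral R Z := Algebra.IsIntegral.of_finite R Z
  have hP'max : P'.IsMaximal := Ideal.isMaximal_of_isIntegral_of_isMaximal_comap P' hcomapR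
  exact key P' hP'max hIP'
end Ker


section Transfer
variable {B A : Type*} [CommRing B] [Ring A] (g : B →+* A)

lemma nilpotent_trick {x : B} (h3 : x ^ 3 = x) (hn : IsNilpotent x) : x = 0 := by
  obtain ⟨n, hn⟩ := hn
  have hx3 : x * x ^ 2 = x := by
    have h : x * x ^ 2 = x ^ 3 := by ring
    rw [h, h3]
  have key : ∀ j : ℕ, x = x ^ (2 * j + 1) := by
    intro j
    induction j with
    | zero => simp
    | succ j ih =>
      have h : x ^ (2 * (j + 1) + 1) = x ^ (2 * j + 1) * x ^ 2 := by ring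
      rw [h, ← ih, hx3]
  calc x = x ^ (2 * n + 1) := key n
    _ = x ^ n * x ^ (n + 1) := by ring
    _ = 0 := by rw [hn, zero_mul]

variable (hnil : ∀ b : B, g b = 0 → IsNilpotent b)

include hnil in
lemma idem_inj0 (b : B) (hb : IsIdempotentElem b) (h0 : g b = 0) : b = 0 :=
  nilpotent_trick (by rw [pow_succ, pow_two, hb]; exact hb) (hnil b h0)

include hnil in
lemma idem_inj (a b : B) (ha : IsIdempotentElem a) (hb : IsIdempotentElem b)
    (h : g a = g b) : a = b := by
  have ha' : a * a = a := ha
  have hb' : b * b = b := hb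
  have h3 : (a - b) ^ 3 = a - b := by
    linear_combination (a + 1 - 3 * b) * ha' + (3 * a - b - 1) * hb'
  have h0 : g (a - b) = 0 := by rw [map_sub, h, sub_self]
  have := nilpotent_trick h3 (hnil _ h0)
  exact sub_eq_zero.mp this

variable (hc : ∀ b : B, g b ∈ Set.center A)
variable (hsur : ∀ e : A, IsIdempotentElem e → e ∈ Set.center A →
  ∃ b : B, IsIdempotentElem b ∧ g b = e)

include hnil hc hsur in
lemma prim_iff (b : B) (hb : IsIdempotentElem b) :
    IsPrimitiveIdempotent b ↔ IsPrimitiveCentralIdempotent (g b) := by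
  constructor
  · rintro ⟨hb1, hb2, hb3⟩
    refine ⟨hb1.map g, hc b, fun h0 => hb2 (idem_inj0 g hnil b hb h0), ?_⟩
    intro α β hα hβ hαc hβc hαβ hsum
    obtain ⟨p, hp, rfl⟩ := hsur α hα hαc
    obtain ⟨q, hq, rfl⟩ := hsur β hβ hβc
    have hpq : p * q = 0 := by
      refine idem_inj0 g hnil _ ?_ (by rw [map_mul, hαβ])
      show p * q * (p * q) = p * q
      have : p * q * (p * q) = (p * p) * (q * q) := by ring
      rw [this, hp, hq]
    have hpqb : p + q = b := by
      refine idem_inj g hnil _ _ ?_ hb (by rw [map_add, hsum])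
      show (p + q) * (p + q) = p + q
      have : (p + q) * (p + q) = p * p + q * q + 2 * (p * q) := by ring
      rw [this, hp, hq, hpq, mul_zero, add_zero]
    rcases hb3 p q hp hq hpq hpqb with h | h
    · exact Or.inl (by rw [h, map_zero])
    · exact Or.inr (by rw [h, map_zero])
  · rintro ⟨h1, h2, h3, h4⟩
    refine ⟨hb, fun h0 => h3 (by rw [h0, map_zero]), ?_⟩
    intro p q hp hq hpq hsum
    rcases h4 (g p) (g q) (hp.map g) (hq.map g) (hc p) (hc q)
      (by rw [← map_mul, hpq, map_zero]) (by rw [← map_add, hsum]) with h | h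
    · exact Or.inl (idem_inj0 g hnil p hp h)
    · exact Or.inr (idem_inj0 g hnil q hq h)

include hnil hc hsur in
lemma transfer_equiv :
    Nonempty ({b : B // IsPrimitiveIdempotent b} ≃ {e : A // IsPrimitiveCentralIdempotent e}) := by
  refine ⟨Equiv.ofBijective
    (fun b => ⟨g b.1, (prim_iff g hnil hc hsur b.1 b.2.1).mp b.2⟩) ⟨?_, ?_⟩⟩
  · intro a b hab
    exact Subtype.ext (idem_inj g hnil a.1 b.1 a.2.1 b.2.1 (congrArg Subtype.val hab))
  · rintro ⟨e, he⟩
    obtain ⟨b, hb, rfl⟩ := hsur e he.1 he.2.1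
    exact ⟨⟨b, (prim_iff g hnil hc hsur b hb).mpr he⟩, rfl⟩
end Transfer

lemma prim_central_iff_comm {B : Type*} [CommRing B] (f : B) :
    IsPrimitiveCentralIdempotent f ↔ IsPrimitiveIdempotent f := by
  have hcen : ∀ x : B, x ∈ Set.center B := by
    intro x; rw [Set.center_eq_univ]; trivial
  constructor
  · rintro ⟨h1, _, h3, h4⟩
    exact ⟨h1, h3, fun a b ha hb hab hsum => h4 a b ha hb (hcen a) (hcen b) hab hsum⟩
  · rintro ⟨h1, h2, h3⟩
    exact ⟨h1, hcen f, h2, fun a b ha hb _ _ hab hsum => h3 a b ha hb hab hsum⟩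

section RingEquivPrim
variable {B C : Type*} [CommRing B] [CommRing C]

lemma prim_map_ringEquiv (σ : B ≃+* C) {b : B} (hb : IsPrimitiveIdempotent b) :
    IsPrimitiveIdempotent (σ b) := by
  obtain ⟨h1, h2, h3⟩ := hb
  refine ⟨h1.map (σ : B →+* C), fun h0 => h2 (by simpa using congrArg σ.symm h0), ?_⟩
  intro a c ha hc hac hsum
  have hsa : IsIdempotentElem (σ.symm a) := ha.map (σ.symm : C →+* B)
  have hsc : IsIdempotentElem (σ.symm c) := hc.map (σ.symm : C →+* B)
  have h5 : σ.symm a * σ.symm c = 0 := by rw [← map_mul, hac, map_zero]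
  have h6 : σ.symm a + σ.symm c = b := by rw [← map_add, hsum]; simp
  rcases h3 _ _ hsa hsc h5 h6 with h | h
  · exact Or.inl (by simpa using congrArg σ h)
  · exact Or.inr (by simpa using congrArg σ h)

def primEquivOfRingEquiv (σ : B ≃+* C) :
    {b : B // IsPrimitiveIdempotent b} ≃ {c : C // IsPrimitiveIdempotent c} where
  toFun b := ⟨σ b.1, prim_map_ringEquiv σ b.2⟩
  invFun c := ⟨σ.symm c.1, prim_map_ringEquiv σ.symm c.2⟩
  left_inv b := Subtype.ext (by simp)
  right_inv c := Subtype.ext (by simp)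
end RingEquivPrim

section PiPrim
variable {ι : Type*} [Finite ι] {L : ι → Type*} [∀ i, CommRing (L i)]

lemma primIdem_pi_equiv (h0 : ∀ i (x : L i), x * x = x → x = 0 ∨ x = 1)
    (h1 : ∀ i, (0 : L i) ≠ 1) :
    Nonempty (ι ≃ {f : ∀ i, L i // IsPrimitiveIdempotent f}) := by
  classical
  have hsingle_idem : ∀ i : ι, IsIdempotentElem (Pi.single i (1 : L i)) := by
    intro i
    show Pi.single i 1 * Pi.single i 1 = Pi.single i 1
    funext j
    by_cases h : j = i
    · subst h; simp
    · simp [Pi.single_eq_of_ne h]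
  have hprim : ∀ i : ι, IsPrimitiveIdempotent (Pi.single i (1 : L i)) := by
    intro i
    refine ⟨hsingle_idem i, ?_, ?_⟩
    · intro h
      exact h1 i (by simpa using (congrFun h i).symm)
    · intro a b ha hb hab hsum
      have haj : ∀ j, a j * a j = a j := fun j => congrFun ha j
      have hbj : ∀ j, b j * b j = b j := fun j => congrFun hb j
      have habj : ∀ j, a j * b j = 0 := fun j => congrFun hab j
      have hsumj : ∀ j, a j + b j = Pi.single i (1 : L i) j := fun j => congrFun hsum j
      have hne : ∀ j, j ≠ i → a j = 0 ∧ b j = 0 := by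
        intro j hj
        have hs := hsumj j
        rw [Pi.single_eq_of_ne hj] at hs
        rcases h0 j (a j) (haj j) with h | h <;> rcases h0 j (b j) (hbj j) with h' | h'
        · exact ⟨h, h'⟩
        · exfalso; rw [h, h', zero_add] at hs; exact h1 j hs.symm
        · exfalso; rw [h, h', add_zero] at hs; exact h1 j hs.symm
        · exfalso; have := habj j; rw [h, h', one_mul] at this; exact h1 j this.symm
      have hi : a i = 0 ∨ b i = 0 := by
        rcases h0 i (a i) (haj i) with h | h
        · exact Or.inl h
        · rcases h0 i (b i) (hbj i) with h' | h'
          · exact Or.inr h'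
          · exfalso; have := habj i; rw [h, h', one_mul] at this; exact h1 i this.symm
      rcases hi with h | h
      · refine Or.inl (funext fun j => ?_)
        by_cases hj : j = i
        · subst hj; exact h
        · exact (hne j hj).1
      · refine Or.inr (funext fun j => ?_)
        by_cases hj : j = i
        · subst hj; exact h
        · exact (hne j hj).2
  refine ⟨Equiv.ofBijective (fun i => ⟨Pi.single i 1, hprim i⟩) ⟨?_, ?_⟩⟩
  · intro i j hij
    by_contra hne
    have h : (Pi.single i (1 : L i) : ∀ j, L j) = Pi.single j 1 := congrArg Subtype.val hij
    have h2 := congrFun h i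
    rw [Pi.single_eq_same, Pi.single_eq_of_ne hne] at h2
    exact h1 i h2.symm
  · rintro ⟨f, hf⟩
    have hfj : ∀ j, f j * f j = f j := fun j => congrFun hf.1 j
    have hex : ∃ i, f i ≠ 0 := by
      by_contra h
      push_neg at h
      exact hf.2.1 (funext h)
    obtain ⟨i, hi⟩ := hex
    have hfi : f i = 1 := (h0 i (f i) (hfj i)).resolve_left hi
    refine ⟨i, Subtype.ext ?_⟩
    show Pi.single i 1 = f
    let a : ∀ j, L j := Pi.single i 1
    let b : ∀ j, L j := f - a
    have hbj : ∀ j, b j = f j - Pi.single i (1 : L i) j := fun j => rfl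
    have haj' : ∀ j, a j = Pi.single i (1 : L i) j := fun j => rfl
    have hb : IsIdempotentElem b := by
      funext j
      show b j * b j = b j
      rw [hbj j]
      by_cases hj : j = i
      · subst hj
        rw [Pi.single_eq_same, hfi]
        ring
      · rw [Pi.single_eq_of_ne hj, sub_zero]
        exact hfj j
    have hab : a * b = 0 := by
      funext j
      show a j * b j = 0
      rw [hbj j, haj' j]
      by_cases hj : j = i
      · subst hj
        rw [Pi.single_eq_same, hfi]
        ring
      · rw [Pi.single_eq_of_ne hj, zero_mul]
    have hsum : a + b = f := by
      show a + (f - a) = f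
      ring
    rcases hf.2.2 a b (hsingle_idem i) hb hab hsum with h | h
    · exfalso
      have h2 := congrFun h i
      rw [haj' i, Pi.single_eq_same] at h2
      exact h1 i (by simpa using h2.symm)
    · have h2 : f - a = 0 := h
      exact (sub_eq_zero.mp h2).symm
end PiPrim

section MaxEquiv
variable {S S' : Type*} [CommRing S] [CommRing S']

noncomputable def maxComapEquiv (f : S →+* S') (hf : Function.Surjective f) :
    {I' : Ideal S' // I'.IsMaximal} ≃ {I : Ideal S // I.IsMaximal ∧ RingHom.ker f ≤ I} where
  toFun I' := ⟨Ideal.comap f I'.1,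
    Ideal.comap_isMaximal_of_surjective f hf (H := I'.2),
    by rw [RingHom.ker_eq_comap_bot]; exact Ideal.comap_mono bot_le⟩
  invFun I := ⟨Ideal.map f I.1, by
    rcases Ideal.map_eq_top_or_isMaximal_of_surjective f hf I.2.1 with h | h
    · exfalso
      have hcm : Ideal.comap f (Ideal.map f I.1) = I.1 := by
        rw [Ideal.comap_map_of_surjective f hf, ← RingHom.ker_eq_comap_bot]
        exact sup_eq_left.mpr I.2.2
      have := I.2.1.ne_top
      rw [← hcm, h, Ideal.comap_top] at this
      exact this rfl
    · exact h⟩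
  left_inv I' := Subtype.ext (Ideal.map_comap_of_surjective f hf I'.1)
  right_inv I := Subtype.ext (by
    simp only
    rw [Ideal.comap_map_of_surjective f hf, ← RingHom.ker_eq_comap_bot]
    exact sup_eq_left.mpr I.2.2)
end MaxEquiv

/-- (Müller) Let `R ⊆ Z ⊆ T` with `T` a prime affine `k`-algebra finite over its center `Z`
(an affine domain) and `Z` finite over the affine subalgebra `R`.  For a maximal ideal `m` of
`R`, the primitive central idempotents of `T/mT` are precisely the images of the primitive
idempotents of `Z/mZ`; consequently the blocks of `T/mT` are in bijection with the maximal
ideals of `Z` lying over `m`. -/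
theorem stmt8 {k R Z T : Type*} [Field k] [IsAlgClosed k]
    [CommRing R] [Algebra k R] [Algebra.FiniteType k R]
    [CommRing Z] [IsDomain Z] [Algebra k Z] [Algebra.FiniteType k Z]
    [Ring T] [Algebra k T] [Algebra.FiniteType k T]
    [Algebra Z T] [IsScalarTower k Z T]
    [Algebra R Z] [IsScalarTower k R Z]
    (hprime : ∀ a b : T, (∀ x : T, a * x * b = 0) → a = 0 ∨ b = 0)
    (hinjZT : Function.Injective (algebraMap Z T))
    (hcenter : ∀ t : T, t ∈ Set.center T ↔ ∃ z : Z, algebraMap Z T z = t)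
    [Module.Finite Z T]
    (hinjRZ : Function.Injective (algebraMap R Z))
    [Module.Finite R Z]
    (m : Ideal R) (hm : m.IsMaximal) :
    (∀ e : (TwoSidedIdeal.span (algebraMap Z T ''
        ((Ideal.map (algebraMap R Z) m) : Set Z))).ringCon.Quotient,
      IsPrimitiveCentralIdempotent e ↔
        ∃ z : Z,
          (RingCon.mk' (TwoSidedIdeal.span (algebraMap Z T ''
            ((Ideal.map (algebraMap R Z) m) : Set Z))).ringCon) (algebraMap Z T z) = e ∧
          IsPrimitiveIdempotent (Ideal.Quotient.mk (Ideal.map (algebraMap R Z) m) z)) ∧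
    Nonempty
      ({e : (TwoSidedIdeal.span (algebraMap Z T ''
          ((Ideal.map (algebraMap R Z) m) : Set Z))).ringCon.Quotient //
            IsPrimitiveCentralIdempotent e} ≃
        {M : Ideal Z // M.IsMaximal ∧ M.comap (algebraMap R Z) = m}) := by
  classical
  haveI : IsNoetherianRing Z := Algebra.FiniteType.isNoetherianRing k Z
  set I : Ideal Z := Ideal.map (algebraMap R Z) m with hIdef
  set πr : T →+* (TwoSidedIdeal.span (algebraMap Z T '' (I : Set Z))).ringCon.Quotient :=
    RingCon.mk' (TwoSidedIdeal.span (algebraMap Z T '' (I : Set Z))).ringCon with hπr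
  have hψ0 : ∀ z ∈ I, (πr.comp (algebraMap Z T)) z = 0 := fun z hz =>
    (mk'_eq_zero_iff I _).mpr
      (by rw [Algebra.algebraMap_eq_smul_one]; exact Submodule.smul_mem_smul hz trivial)
  set ψbar : Z ⧸ I →+* (TwoSidedIdeal.span (algebraMap Z T '' (I : Set Z))).ringCon.Quotient :=
    Ideal.Quotient.lift I (πr.comp (algebraMap Z T)) hψ0 with hψbar
  have hψmk : ∀ z : Z, ψbar (Ideal.Quotient.mk I z) = πr (algebraMap Z T z) := fun z => rfl
  have hnilψ : ∀ b : Z ⧸ I, ψbar b = 0 → IsNilpotent b := by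
    intro b hb
    obtain ⟨z, rfl⟩ := Ideal.Quotient.mk_surjective b
    rw [hψmk] at hb
    exact ker_nil m hm hinjZT z hb
  have hcψ : ∀ b : Z ⧸ I, ψbar b ∈ Set.center _ := by
    intro b
    obtain ⟨z, rfl⟩ := Ideal.Quotient.mk_surjective b
    rw [hψmk]
    exact image_central I z
  have hsurψ : ∀ e, IsIdempotentElem e → e ∈ Set.center _ →
      ∃ b, IsIdempotentElem b ∧ ψbar b = e := by
    intro e he hce
    obtain ⟨z, hz1, hz2⟩ := exists_idem_preimage I hinjZT hcenter e he hce
    exact ⟨Ideal.Quotient.mk I z, hz1, by rw [hψmk]; exact hz2⟩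
  constructor
  · intro e
    constructor
    · intro he
      obtain ⟨b, hb, hbe⟩ := hsurψ e he.1 he.2.1
      obtain ⟨z, rfl⟩ := Ideal.Quotient.mk_surjective b
      refine ⟨z, by rw [← hψmk]; exact hbe, ?_⟩
      rw [← hbe] at he
      exact (prim_iff ψbar hnilψ hcψ hsurψ _ hb).mpr he
    · rintro ⟨z, hze, hzprim⟩
      have h := (prim_iff ψbar hnilψ hcψ hsurψ _ hzprim.1).mp hzprim
      rw [hψmk, hze] at h
      exact h
  · obtain ⟨E1⟩ := transfer_equiv ψbar hnilψ hcψ hsurψ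
    haveI : Module.Finite R (Z ⧸ I) := Module.Finite.of_surjective
      (Ideal.Quotient.mkₐ R I).toLinearMap (Ideal.Quotient.mkₐ_surjective R I)
    haveI := hm
    letI : Field (R ⧸ m) := Ideal.Quotient.field m
    have hle : m ≤ Ideal.comap (algebraMap R Z) I := Ideal.le_comap_map
    let qm : R ⧸ m →+* Z ⧸ I := Ideal.quotientMap I (algebraMap R Z) hle
    letI : Algebra (R ⧸ m) (Z ⧸ I) := qm.toAlgebra
    haveI : IsScalarTower R (R ⧸ m) (Z ⧸ I) := IsScalarTower.of_algebraMap_eq' (by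
      rw [RingHom.algebraMap_toAlgebra, Ideal.Quotient.algebraMap_eq,
        Ideal.quotientMap_comp_mk hle]
      rfl)
    haveI : Module.Finite (R ⧸ m) (Z ⧸ I) :=
      Module.Finite.of_restrictScalars_finite R (R ⧸ m) (Z ⧸ I)
    haveI : IsArtinianRing (Z ⧸ I) := IsArtinianRing.of_finite (R ⧸ m) (Z ⧸ I)
    -- step 2 : Z ⧸ I to its reduction
    set A' := (Z ⧸ I) ⧸ nilradical (Z ⧸ I) with hA'
    let g2 : Z ⧸ I →+* A' := Ideal.Quotient.mk (nilradical (Z ⧸ I))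
    have hnil2 : ∀ b : Z ⧸ I, g2 b = 0 → IsNilpotent b := fun b hb =>
      mem_nilradical.mp (Ideal.Quotient.eq_zero_iff_mem.mp hb)
    have hc2 : ∀ b : Z ⧸ I, g2 b ∈ Set.center A' := fun b => by
      rw [Set.center_eq_univ]; trivial
    have hsur2 : ∀ e : A', IsIdempotentElem e → e ∈ Set.center A' →
        ∃ b, IsIdempotentElem b ∧ g2 b = e := by
      intro e he _
      obtain ⟨b, hb, hbe⟩ := exists_isIdempotentElem_eq_of_ker_isNilpotent (f := g2)
        (fun x hx => mem_nilradical.mp (by rwa [Ideal.mk_ker] at hx)) e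
        (Ideal.Quotient.mk_surjective e) he
      exact ⟨b, hb, hbe⟩
    obtain ⟨E2⟩ := transfer_equiv g2 hnil2 hc2 hsur2
    let E2' := E2.trans (Equiv.subtypeEquivRight (fun c => prim_central_iff_comm c))
    -- step 3 : structure theorem
    let σ := IsArtinianRing.quotNilradicalEquivPi (Z ⧸ I)
    let E3 := primEquivOfRingEquiv σ.toRingEquiv
    -- step 4 : primitive idempotents of the product
    haveI : Finite (MaximalSpectrum (Z ⧸ I)) := inferInstance
    have h0 : ∀ (Im : MaximalSpectrum (Z ⧸ I)) (x : (Z ⧸ I) ⧸ Im.asIdeal),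
        x * x = x → x = 0 ∨ x = 1 := by
      intro Im x hx
      haveI : Im.asIdeal.IsMaximal := Im.isMaximal
      have hz : x * (x - 1) = 0 := by linear_combination hx
      rcases mul_eq_zero.mp hz with h | h
      · exact Or.inl h
      · exact Or.inr (by linear_combination h)
    have h1 : ∀ Im : MaximalSpectrum (Z ⧸ I), (0 : (Z ⧸ I) ⧸ Im.asIdeal) ≠ 1 := by
      intro Im
      haveI : Im.asIdeal.IsMaximal := Im.isMaximal
      haveI : Nontrivial ((Z ⧸ I) ⧸ Im.asIdeal) := Ideal.Quotient.nontrivial_iff.mpr Im.isMaximal.ne_top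
      exact zero_ne_one
    obtain ⟨E4⟩ := primIdem_pi_equiv h0 h1
    -- step 5 : maximal ideals
    let E5 := maxComapEquiv (Ideal.Quotient.mk I) Ideal.Quotient.mk_surjective
    have hiff : ∀ M : Ideal Z,
        (M.IsMaximal ∧ RingHom.ker (Ideal.Quotient.mk I) ≤ M) ↔
          (M.IsMaximal ∧ M.comap (algebraMap R Z) = m) := by
      intro M
      rw [Ideal.mk_ker]
      constructor
      · rintro ⟨hmax, hIM⟩
        refine ⟨hmax, ?_⟩
        have hle1 : m ≤ M.comap (algebraMap R Z) := by
          intro r hr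
          rw [Ideal.mem_comap]
          exact hIM (Ideal.mem_map_of_mem _ hr)
        have hne : M.comap (algebraMap R Z) ≠ ⊤ := by
          intro htop
          have : (1 : R) ∈ M.comap (algebraMap R Z) := htop ▸ trivial
          rw [Ideal.mem_comap, map_one] at this
          exact hmax.ne_top ((Ideal.eq_top_iff_one M).mpr this)
        exact (hm.eq_of_le hne hle1).symm
      · rintro ⟨hmax, hcom⟩
        exact ⟨hmax, Ideal.map_le_iff_le_comap.mpr (hcom ▸ le_rfl)⟩
    let Ebridge : MaximalSpectrum (Z ⧸ I) ≃ {Iid : Ideal (Z ⧸ I) // Iid.IsMaximal} :=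
      MaximalSpectrum.equivSubtype (Z ⧸ I)
    exact ⟨E1.symm.trans (E2'.trans (E3.trans (E4.symm.trans (Ebridge.trans (E5.trans
      (Equiv.subtypeEquivRight hiff))))))⟩
end

section
/- Let T be a commutative local finite dimensional algebra over a field k that is a truncated polynomial ring k[X]/(X^n), and let C ⊆ T be a subalgebra that is a Frobenius algebra. Then every ideal of C is the contraction of an ideal of T; in particular C is uniserial. -/
set_option synthInstance.maxHeartbeats 1000000
set_option maxHeartbeats 1000000

open Polynomial in
/-- The ideals of `k[X]/(Xⁿ)` form a chain. -/
lemma stmt16_chainT {k : Type*} [Field k] {n : ℕ}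
    (J J' : Ideal (Polynomial k ⧸ Ideal.span {(X : k[X]) ^ n})) : J ≤ J' ∨ J' ≤ J := by
  set f := Ideal.Quotient.mk (Ideal.span {(X : k[X]) ^ n}) with hf
  have hsurj : Function.Surjective f := Ideal.Quotient.mk_surjective
  have key : ∀ K : Ideal (Polynomial k ⧸ Ideal.span {(X : k[X]) ^ n}),
      ∃ i : ℕ, Ideal.comap f K = Ideal.span {(X : k[X]) ^ i} := by
    intro K
    obtain ⟨g, hg⟩ := (IsPrincipalIdealRing.principal (Ideal.comap f K)).principal
    rw [Ideal.submodule_span_eq] at hg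
    have hXn : (X : k[X]) ^ n ∈ Ideal.comap f K := by
      have : f ((X : k[X]) ^ n) = 0 := by
        rw [hf, Ideal.Quotient.eq_zero_iff_mem]
        exact Ideal.mem_span_singleton_self _
      simp [Ideal.mem_comap, this]
    rw [hg] at hXn ⊢
    have hdvd : g ∣ (X : k[X]) ^ n := Ideal.mem_span_singleton.mp hXn
    obtain ⟨i, _, hassoc⟩ := (dvd_prime_pow Polynomial.prime_X n).mp hdvd
    exact ⟨i, Ideal.span_singleton_eq_span_singleton.mpr hassoc⟩
  obtain ⟨i, hi⟩ := key J
  obtain ⟨j, hj⟩ := key J'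
  rcases le_total i j with h | h
  · right
    rw [← Ideal.comap_le_comap_iff_of_surjective f hsurj, hi, hj]
    exact Ideal.span_singleton_le_span_singleton.mpr (pow_dvd_pow X h)
  · left
    rw [← Ideal.comap_le_comap_iff_of_surjective f hsurj, hi, hj]
    exact Ideal.span_singleton_le_span_singleton.mpr (pow_dvd_pow X h)

/-- Let `T = k[X]/(Xⁿ)` be a truncated polynomial ring (a commutative local finite
dimensional `k`-algebra) and `C ⊆ T` a subalgebra which is a Frobenius algebra, i.e. carries
a linear functional `λ` with nondegenerate associated pairing `(a, b) ↦ λ(ab)`.  Then every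
ideal of `C` is the contraction of an ideal of `T`; in particular `C` is uniserial. -/
theorem stmt16 {k : Type*} [Field k] (n : ℕ)
    (C : Subalgebra k (Polynomial k ⧸ Ideal.span {(Polynomial.X : Polynomial k) ^ n}))
    (lam : C →ₗ[k] k)
    (hfrob : ∀ c : C, c ≠ 0 → ∃ d : C, lam (c * d) ≠ 0) :
    (∀ I : Ideal C,
      ∃ J : Ideal (Polynomial k ⧸ Ideal.span {(Polynomial.X : Polynomial k) ^ n}),
        I = J.comap C.val) ∧
    (∀ I I' : Ideal C, I ≤ I' ∨ I' ≤ I) := by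
  classical
  haveI hT : FiniteDimensional k (Polynomial k ⧸ Ideal.span {(Polynomial.X : Polynomial k) ^ n}) :=
    (AdjoinRoot.powerBasis (pow_ne_zero n Polynomial.X_ne_zero)).finite
  haveI hC : FiniteDimensional k C := FiniteDimensional.finiteDimensional_submodule C.toSubmodule
  -- the Frobenius bilinear form
  set B : LinearMap.BilinForm k C := LinearMap.mk₂ k (fun a b => lam (a * b))
    (fun a a' b => by simp [add_mul])
    (fun r a b => by simp [smul_mul_assoc])
    (fun a b b' => by simp [mul_add])
    (fun r a b => by simp [mul_smul_comm]) with hB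
  have hBapp : ∀ a b : C, B a b = lam (a * b) := fun a b => rfl
  have hsymm : ∀ a b : C, B a b = B b a := fun a b => by rw [hBapp, hBapp, mul_comm]
  have hrefl : B.IsRefl := fun a b h => by rw [hsymm]; exact h
  have hnd : B.Nondegenerate := by
    refine (LinearMap.IsRefl.nondegenerate_iff_separatingLeft hrefl).mpr ?_
    intro c h
    by_contra hc
    obtain ⟨d, hd⟩ := hfrob c hc
    exact hd (h d)
  have main : ∀ I : Ideal C,
      ∃ J : Ideal (Polynomial k ⧸ Ideal.span {(Polynomial.X : Polynomial k) ^ n}),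
        I = J.comap C.val := by
    intro I
    set W : Submodule k C := I.restrictScalars k with hW
    set A : Submodule k C := B.orthogonal W with hA
    -- the orthogonal complement is exactly the annihilator of `I`
    have hmemA : ∀ a : C, a ∈ A ↔ ∀ i ∈ I, i * a = 0 := by
      intro a
      constructor
      · intro ha i hi
        by_contra h0
        obtain ⟨d, hd⟩ := hfrob _ h0
        apply hd
        have h1 : i * d ∈ I := I.mul_mem_right d hi
        have h2 : B (i * d) a = 0 := ha (i * d) h1
        rw [hBapp] at h2
        calc lam (i * a * d) = lam (i * d * a) := by ring_nf
        _ = 0 := h2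
      · intro h i hi
        show B i a = 0
        rw [hBapp, h i hi, map_zero]
    refine ⟨(Submodule.span _ (C.val '' (A : Set C))).annihilator, ?_⟩
    ext c
    have hcomap : c ∈ Ideal.comap C.val (Submodule.span _ (C.val '' (A : Set C))).annihilator
        ↔ ∀ a ∈ A, c * a = 0 := by
      rw [Ideal.mem_comap, Submodule.mem_annihilator_span]
      constructor
      · intro h a ha
        have h1 := h ⟨C.val a, Set.mem_image_of_mem _ ha⟩
        simp only [smul_eq_mul] at h1
        have h2 : C.val (c * a) = C.val 0 := by
          rw [map_mul, map_zero]; exact h1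
        exact Subtype.ext (by simpa using h2)
      · rintro h ⟨t, a, ha, rfl⟩
        have h2 := congrArg C.val (h a ha)
        rw [map_mul, map_zero] at h2
        simpa [smul_eq_mul] using h2
    rw [hcomap]
    constructor
    · intro hc a ha
      exact (hmemA a).mp ha c hc
    · intro h
      have hc : c ∈ B.orthogonal A := by
        intro a ha
        show B a c = 0
        rw [hsymm, hBapp, h a ha, map_zero]
      rw [hA, LinearMap.BilinForm.orthogonal_orthogonal hnd hrefl] at hc
      exact hc
  refine ⟨main, ?_⟩
  intro I I'
  obtain ⟨J, rfl⟩ := main I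
  obtain ⟨J', rfl⟩ := main I'
  rcases stmt16_chainT J J' with h | h
  · exact Or.inl (Ideal.comap_mono h)
  · exact Or.inr (Ideal.comap_mono h)
end

section
/- Let W be a finite Coxeter group with simple reflections indexed by a Coxeter graph Γ, and let W' be a standard parabolic subgroup generated by all simple reflections except s_i. If the Coxeter graph Γ contains either (a) a vertex i with two distinct neighbours, both joined to i by single bonds forming a path, or configurations as in types D/E at a branch vertex adjacent to i, or (b) a double bond adjacent to the node i as in type B/F, then the set W^{λ} of minimal length coset representatives of W' in W contains two distinct elements of equal length. -/
open List

namespace Stmt18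

variable {B W : Type*} [Group W] {M : CoxeterMatrix B} (cs : CoxeterSystem M W)

local prefix:100 "s" => cs.simple
local prefix:100 "π" => cs.wordProd
local prefix:100 "ℓ" => cs.length

open scoped Classical in
/-- The sign/reflection permutation representation on `W × ZMod 2`. -/
noncomputable def sgn (a : B) : Equiv.Perm (W × ZMod 2) :=
  Function.Involutive.toPerm
    (fun p => (cs.simple a * p.1 * cs.simple a,
      p.2 + if p.1 = cs.simple a then 1 else 0))
    (by
      rintro ⟨t, e⟩
      have h1 : s a * (s a * t * s a) * s a = t := by
        rw [mul_assoc (s a) t, ← mul_assoc (s a), cs.simple_mul_simple_self, one_mul,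
          mul_assoc, cs.simple_mul_simple_self, mul_one]
      have h2 : (s a * t * s a = s a) ↔ (t = s a) := by
        constructor
        · intro h
          have := congrArg (fun z => s a * z * s a) h
          simpa [h1, ← mul_assoc, cs.simple_mul_simple_self] using this
        · rintro rfl
          rw [cs.simple_mul_simple_self, one_mul]
      simp only [Prod.mk.injEq]
      refine ⟨h1, ?_⟩
      by_cases h : t = s a
      · simp [h, h2, add_assoc]
        decide
      · simp [h, h2])

open scoped Classical in
lemma sgn_apply (a : B) (t : W) (e : ZMod 2) :
    sgn cs a (t, e) = (s a * t * s a, e + if t = s a then 1 else 0) := rfl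

private lemma conj_iff (g h z t : W) : (g * t * h = z) ↔ (t = g⁻¹ * z * h⁻¹) := by
  constructor
  · rintro rfl; group
  · rintro rfl; group

open scoped Classical in
lemma sgn_mul_pow (a b : B) (p : ℕ) (t : W) (e : ZMod 2) :
    ((sgn cs a * sgn cs b) ^ p) (t, e) =
      ((s a * s b) ^ p * t * (s b * s a) ^ p,
        e + ∑ r ∈ Finset.range (2 * p), if t = (s b * s a) ^ r * s b then 1 else 0) := by
  induction p generalizing t e with
  | zero => simp
  | succ p ih =>
    rw [pow_succ, Equiv.Perm.mul_apply, Equiv.Perm.mul_apply, sgn_apply, sgn_apply, ih]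
    have hc1 : (s b * t * s b = s a) ↔ (t = s b * s a * s b) := by
      rw [conj_iff, cs.inv_simple]
    have hfst : (s a * s b) ^ p * (s a * (s b * t * s b) * s a) * (s b * s a) ^ p
        = (s a * s b) ^ (p + 1) * t * (s b * s a) ^ (p + 1) := by
      rw [pow_succ, pow_succ']
      simp [mul_assoc]
    have key : ∀ r : ℕ, (s b)⁻¹ * ((s a)⁻¹ * ((s b * s a) ^ r * s b) * (s a)⁻¹) * (s b)⁻¹
        = (s b * s a) ^ (r + 2) * s b := by
      intro r
      rw [cs.inv_simple, cs.inv_simple]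
      calc s b * (s a * ((s b * s a) ^ r * s b) * s a) * s b
          = ((s b * s a) * (s b * s a) ^ r) * ((s b * s a) * s b) := by
            simp only [mul_assoc]
        _ = (s b * s a) ^ (r + 1) * ((s b * s a) * s b) := by rw [← pow_succ']
        _ = ((s b * s a) ^ (r + 1) * (s b * s a)) * s b := by simp only [mul_assoc]
        _ = (s b * s a) ^ (r + 2) * s b := by rw [← pow_succ]
    have hcond : ∀ r : ℕ,
        (s a * (s b * t * s b) * s a = (s b * s a) ^ r * s b)
          ↔ (t = (s b * s a) ^ (r + 2) * s b) := by
      intro r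
      rw [conj_iff, conj_iff, key r]
    have hsum : (e + if t = s b then 1 else 0)
          + (if s b * t * s b = s a then (1 : ZMod 2) else 0)
          + ∑ r ∈ Finset.range (2 * p),
              (if s a * (s b * t * s b) * s a = (s b * s a) ^ r * s b then (1 : ZMod 2) else 0)
        = e + ∑ r ∈ Finset.range (2 * (p + 1)),
            (if t = (s b * s a) ^ r * s b then (1 : ZMod 2) else 0) := by
      have h2p : 2 * (p + 1) = (2 * p + 1) + 1 := by ring
      rw [h2p, Finset.sum_range_succ', Finset.sum_range_succ']
      have e1 : ∀ k : ℕ, k + 1 + 1 = k + 2 := fun k => rfl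
      simp only [e1, hcond, hc1, pow_zero, one_mul, pow_one, zero_add]
      abel
    rw [Prod.mk.injEq]
    exact ⟨hfst, hsum⟩

lemma sgn_liftable : M.IsLiftable (sgn cs) := by
  classical
  intro a b
  rcases Nat.eq_zero_or_pos (M a b) with h | h
  · rw [h, pow_zero]
  · apply Equiv.ext
    rintro ⟨t, e⟩
    rw [sgn_mul_pow, Equiv.Perm.one_apply]
    have hx : (s a * s b) ^ (M a b) = 1 := cs.simple_mul_simple_pow a b
    have hy : (s b * s a) ^ (M a b) = 1 := cs.simple_mul_simple_pow' a b
    rw [Prod.mk.injEq]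
    constructor
    · rw [hx, hy, one_mul, mul_one]
    · have : ∑ r ∈ Finset.range (2 * M a b),
          (if t = (s b * s a) ^ r * s b then (1 : ZMod 2) else 0) = 0 := by
        rw [two_mul, Finset.sum_range_add]
        have hshift : ∀ r : ℕ, (s b * s a) ^ (M a b + r) * s b = (s b * s a) ^ r * s b := by
          intro r
          rw [pow_add, hy, one_mul]
        simp only [hshift]
        have : ∀ z : ZMod 2, z + z = 0 := by decide
        exact this _
      rw [this, add_zero]


local prefix:100 "ris" => cs.rightInvSeq

/-- The lifted sign representation. -/
noncomputable def rho : W →* Equiv.Perm (W × ZMod 2) :=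
  cs.lift ⟨sgn cs, sgn_liftable cs⟩

lemma ris_cons (a : B) (ω : List B) :
    ris (a :: ω) = ((π ω)⁻¹ * (s a) * (π ω)) :: ris ω := rfl

open scoped Classical in
lemma rho_wordProd (ω : List B) (t : W) (e : ZMod 2) :
    rho cs (π ω) (t, e) =
      (π ω * t * (π ω)⁻¹,
        e + ((ris ω).map (fun u => if t = u then (1 : ZMod 2) else 0)).sum) := by
  induction ω generalizing e with
  | nil => simp [rho]
  | cons a ω ih =>
    rw [cs.wordProd_cons, map_mul, Equiv.Perm.mul_apply, ih]
    have hra : rho cs (s a) = sgn cs a := cs.lift_apply_simple (sgn_liftable cs) a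
    rw [hra, sgn_apply, ris_cons]
    rw [Prod.mk.injEq]
    constructor
    · rw [mul_inv_rev, cs.inv_simple]
      simp [mul_assoc]
    · have hiff : (π ω * t * (π ω)⁻¹ = s a) ↔ (t = (π ω)⁻¹ * (s a) * (π ω)) := by
        rw [conj_iff, inv_inv]
      simp only [map_cons, List.sum_cons, hiff]
      abel

open scoped Classical in
lemma sum_indicator_nodup {t : W} {l : List W} (hl : l.Nodup) :
    ((l.map (fun u => if t = u then (1 : ZMod 2) else 0)).sum)
      = if t ∈ l then 1 else 0 := by
  induction l with
  | nil => simp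
  | cons h l ih =>
    rw [List.nodup_cons] at hl
    rw [List.map_cons, List.sum_cons, ih hl.2]
    by_cases ht : t = h
    · subst ht
      simp [hl.1]
    · simp [ht, List.mem_cons]

/-- Membership in the right inversion sequence only depends on the element, for reduced words. -/
lemma mem_ris_iff_mem_ris {ω₁ ω₂ : List B} (h₁ : cs.IsReduced ω₁) (h₂ : cs.IsReduced ω₂)
    (h : π ω₁ = π ω₂) (t : W) : t ∈ ris ω₁ ↔ t ∈ ris ω₂ := by
  classical
  have e1 := rho_wordProd cs ω₁ t 0
  have e2 := rho_wordProd cs ω₂ t 0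
  rw [h] at e1
  rw [e2] at e1
  have := (Prod.mk.injEq _ _ _ _).mp e1
  rw [sum_indicator_nodup h₂.nodup_rightInvSeq,
    sum_indicator_nodup h₁.nodup_rightInvSeq] at this
  have h2 := this.2
  by_cases m1 : t ∈ ris ω₁ <;> by_cases m2 : t ∈ ris ω₂ <;> simp_all

/-- If `k` is a right descent of `w`, then `s k` belongs to the right inversion sequence of
every reduced word for `w`. -/
lemma simple_mem_ris_of_isRightDescent {w : W} {k : B} (hd : cs.IsRightDescent w k)
    {ω : List B} (hω : cs.IsReduced ω) (h : π ω = w) : s k ∈ ris ω := by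
  obtain ⟨ω', hlen, hw'⟩ := cs.exists_reduced_word (w * s k)
  have hlen2 : ℓ (w * s k) + 1 = ℓ w := (cs.isRightDescent_iff).mp hd
  have hπ : π (ω'.concat k) = w := by
    rw [cs.wordProd_concat, ← hw', cs.simple_mul_simple_cancel_right]
  have hred : cs.IsReduced (ω'.concat k) := by
    unfold CoxeterSystem.IsReduced
    rw [hπ, List.length_concat, ← show ℓ (π ω') = ω'.length from hlen, ← hw', hlen2]
  have hmem : s k ∈ ris (ω'.concat k) := by
    rw [cs.rightInvSeq_concat]
    simp
  exact (mem_ris_iff_mem_ris cs hred hω (by rw [hπ, h]) (s k)).mp hmem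


/-! ### The geometric representation -/

open Real

/-- The cosine matrix entries of the geometric representation. -/
noncomputable def km (M : CoxeterMatrix B) (a b : B) : ℝ := - Real.cos (Real.pi / (M a b : ℕ))

lemma km_self (M : CoxeterMatrix B) (a : B) : km M a a = 1 := by
  rw [km, M.diagonal a]
  norm_num

lemma km_comm (M : CoxeterMatrix B) (a b : B) : km M a b = km M b a := by
  rw [km, km]
  have h : M.M b a = M.M a b := by
    have := congrFun (congrFun M.isSymm a) b
    rwa [Matrix.transpose_apply] at this
  show -Real.cos (Real.pi / (M.M a b : ℕ)) = -Real.cos (Real.pi / (M.M b a : ℕ))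
  rw [h]

/-- The linear functional `v ↦ B(v, eₐ)`. -/
noncomputable def fform (M : CoxeterMatrix B) (a : B) : (B →₀ ℝ) →ₗ[ℝ] ℝ :=
  Finsupp.linearCombination ℝ (fun b => km M b a)

lemma fform_single (M : CoxeterMatrix B) (a b : B) :
    fform M a (Finsupp.single b 1) = km M b a := by
  rw [fform, Finsupp.linearCombination_single, one_smul]

/-- The geometric reflection associated to a generator. -/
noncomputable def sig (M : CoxeterMatrix B) (a : B) : Module.End ℝ (B →₀ ℝ) :=
  LinearMap.id - (fform M a).smulRight ((2:ℝ) • Finsupp.single a 1)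

lemma sig_apply (M : CoxeterMatrix B) (a : B) (v : B →₀ ℝ) :
    sig M a v = v - (2 * fform M a v) • Finsupp.single a 1 := by
  show v - fform M a v • ((2:ℝ) • Finsupp.single a 1) = _
  rw [smul_smul, mul_comm]

lemma fform_sig (M : CoxeterMatrix B) (a b : B) (v : B →₀ ℝ) :
    fform M b (sig M a v) = fform M b v - 2 * fform M a v * km M a b := by
  rw [sig_apply, map_sub, map_smul, fform_single, smul_eq_mul]

lemma sig_sig (M : CoxeterMatrix B) (a : B) (v : B →₀ ℝ) :
    sig M a (sig M a v) = v := by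
  rw [sig_apply M a (sig M a v), fform_sig, km_self, sig_apply]
  have h : 2 * (fform M a v - 2 * fform M a v * 1) = -(2 * fform M a v) := by ring
  rw [h, neg_smul]
  abel

lemma sig_single_of_ne (M : CoxeterMatrix B) {a k : B} (h : a ≠ k) (v : B →₀ ℝ) :
    (sig M a v) k = v k := by
  rw [sig_apply, Finsupp.sub_apply, Finsupp.smul_apply, Finsupp.single_eq_of_ne' h]
  simp

lemma sig_single_self (M : CoxeterMatrix B) (a : B) :
    sig M a (Finsupp.single a 1) = - Finsupp.single a 1 := by
  rw [sig_apply, fform_single, km_self]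
  simp only [mul_one]
  rw [two_smul]
  abel


section Plane

variable (M : CoxeterMatrix B) (a b : B)

local notation "T" => sig M a * sig M b
local notation "c" => km M a b
local notation "ea" => Finsupp.single a (1:ℝ)
local notation "eb" => Finsupp.single b (1:ℝ)

lemma T_apply (v : B →₀ ℝ) :
    T v = v - (2 * fform M a v - 4 * c * fform M b v) • ea - (2 * fform M b v) • eb := by
  rw [Module.End.mul_apply, sig_apply M a (sig M b v), fform_sig, sig_apply M b v,
    km_comm M b a]
  module

lemma T_ea : T ea = (4 * c ^ 2 - 1) • ea - (2 * c) • eb := by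
  rw [T_apply, fform_single, fform_single, km_self]
  module

lemma T_eb : T eb = (2 * c) • ea - eb := by
  rw [T_apply, fform_single, fform_single, km_self, km_comm M b a]
  module

lemma T_sq_ea : T (T ea) = (4 * c ^ 2 - 2) • T ea - ea := by
  rw [T_ea, map_sub, map_smul, map_smul, T_ea, T_eb]
  module

lemma T_sq_eb : T (T eb) = (4 * c ^ 2 - 2) • T eb - eb := by
  rw [T_eb, map_sub, map_smul, T_ea, T_eb]
  module

lemma T_pow_fix (e : B →₀ ℝ) (hTT : T (T e) = (4 * c ^ 2 - 2) • T e - e)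
    {m : ℕ} (hm : 3 ≤ m) (hmM : (M a b : ℕ) = m) : (T ^ m) e = e := by
  classical
  set θ : ℝ := Real.pi / m with hθ
  have hm0 : (0:ℝ) < m := by positivity
  have h3 : (3:ℝ) ≤ m := by exact_mod_cast hm
  have hθpos : 0 < θ := by rw [hθ]; positivity
  have hθlt : 2 * θ < Real.pi := by
    rw [hθ]
    rw [show 2 * (Real.pi / (m:ℝ)) = 2 * Real.pi / m by ring, div_lt_iff₀ hm0]
    nlinarith [Real.pi_pos]
  have hsin : Real.sin (2 * θ) ≠ 0 :=
    (Real.sin_pos_of_pos_of_lt_pi (by positivity) hθlt).ne'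
  have hc : c = - Real.cos θ := by rw [km, hmM, hθ]
  have hD : (4 * c ^ 2 - 2 : ℝ) = 2 * Real.cos (2 * θ) := by
    rw [hc, Real.cos_two_mul]; ring
  have key : ∀ k : ℕ, Real.sin (2 * θ) • ((T ^ (k+1)) e)
      = Real.sin (2 * ((k:ℝ) + 1) * θ) • T e - Real.sin (2 * (k:ℝ) * θ) • e := by
    intro k
    induction k with
    | zero =>
      rw [pow_one]
      norm_num
    | succ k ih =>
      have hstep : (T ^ (k+1+1)) e = T ((T ^ (k+1)) e) := by
        rw [pow_succ']
        rfl
      rw [hstep, ← map_smul, ih, map_sub, map_smul, map_smul, hTT]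
      have htrig1 : Real.sin (2 * ((k:ℝ) + 1 + 1) * θ)
          = (4 * c ^ 2 - 2) * Real.sin (2 * ((k:ℝ)+1) * θ) - Real.sin (2 * (k:ℝ) * θ) := by
        rw [hD]
        have e1 : 2 * ((k:ℝ) + 1 + 1) * θ = 2 * ((k:ℝ)+1) * θ + 2 * θ := by ring
        have e2 : 2 * (k:ℝ) * θ = 2 * ((k:ℝ)+1) * θ - 2 * θ := by ring
        rw [e1, e2, Real.sin_add, Real.sin_sub]
        ring
      push_cast
      rw [htrig1]
      module
  have h1 : Real.sin (2 * θ) • ((T ^ m) e) = Real.sin (2 * θ) • e := by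
    obtain ⟨k, rfl⟩ : ∃ k, m = k + 1 := ⟨m - 1, by omega⟩
    have hne : ((k:ℝ) + 1) ≠ 0 := by positivity
    have e2m : 2 * ((k:ℝ) + 1) * θ = 2 * Real.pi := by
      rw [hθ]
      push_cast
      field_simp
    have e2m1 : 2 * (k:ℝ) * θ = 2 * Real.pi - 2 * θ := by
      rw [show 2 * (k:ℝ) * θ = 2*((k:ℝ)+1)*θ - 2*θ by ring, e2m]
    rw [key k, e2m, e2m1, Real.sin_two_pi, Real.sin_sub, Real.sin_two_pi, Real.cos_two_pi]
    rw [zero_smul, zero_sub]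
    rw [show (0 * Real.cos (2*θ) - 1 * Real.sin (2*θ)) = -Real.sin (2*θ) by ring]
    rw [neg_smul, neg_neg]
  exact smul_right_injective _ hsin h1

end Plane


lemma one_sub_km_sq_pos (M : CoxeterMatrix B) {a b : B} (hab : a ≠ b) (hm : M a b ≠ 0) :
    0 < 1 - km M a b ^ 2 := by
  have h2 : 2 ≤ M a b := by
    have := M.off_diagonal a b hab
    omega
  have hm0 : (0:ℝ) < (M a b : ℕ) := by
    have : 0 < M a b := by omega
    exact_mod_cast this
  have h2' : (2:ℝ) ≤ (M a b : ℕ) := by exact_mod_cast h2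
  have hθpos : 0 < Real.pi / (M a b : ℕ) := by positivity
  have hθlt : Real.pi / (M a b : ℕ) < Real.pi := by
    rw [div_lt_iff₀ hm0]
    nlinarith [Real.pi_pos]
  have hsin := Real.sin_pos_of_pos_of_lt_pi hθpos hθlt
  have : km M a b ^ 2 = Real.cos (Real.pi / (M a b : ℕ)) ^ 2 := by
    rw [km]; ring
  rw [this, show (1:ℝ) - Real.cos (Real.pi / (M a b : ℕ)) ^ 2
    = Real.sin (Real.pi / (M a b : ℕ)) ^ 2 by
      have := Real.sin_sq_add_cos_sq (Real.pi / (M a b : ℕ)); linarith]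
  positivity

lemma T_pow_fix_all (M : CoxeterMatrix B) {a b : B} (hab : a ≠ b) (hm : M a b ≠ 0)
    (hea : ((sig M a * sig M b) ^ (M a b : ℕ)) (Finsupp.single a 1) = Finsupp.single a 1)
    (heb : ((sig M a * sig M b) ^ (M a b : ℕ)) (Finsupp.single b 1) = Finsupp.single b 1)
    (v : B →₀ ℝ) : ((sig M a * sig M b) ^ (M a b : ℕ)) v = v := by
  classical
  set c := km M a b with hc
  have hd : 1 - c ^ 2 ≠ 0 := (one_sub_km_sq_pos M hab hm).ne'
  set fa := fform M a v with hfa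
  set fb := fform M b v with hfb
  set α : ℝ := (fa - c * fb) / (1 - c ^ 2) with hα
  set β : ℝ := (fb - c * fa) / (1 - c ^ 2) with hβ
  set r : B →₀ ℝ := v - α • Finsupp.single a 1 - β • Finsupp.single b 1 with hr
  have hfar : fform M a r = 0 := by
    rw [hr, map_sub, map_sub, map_smul, map_smul, fform_single, fform_single, km_self,
      km_comm M b a, ← hc, ← hfa, smul_eq_mul, smul_eq_mul, hα, hβ]
    field_simp
    ring
  have hfbr : fform M b r = 0 := by
    rw [hr, map_sub, map_sub, map_smul, map_smul, fform_single, fform_single, km_self,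
      ← hc, ← hfb, smul_eq_mul, smul_eq_mul, hα, hβ]
    field_simp
    ring
  have hTr : (sig M a * sig M b) r = r := by
    rw [Module.End.mul_apply, sig_apply M b r, hfbr, mul_zero, zero_smul, sub_zero,
      sig_apply M a r, hfar, mul_zero, zero_smul, sub_zero]
  have hTnr : ∀ n : ℕ, ((sig M a * sig M b) ^ n) r = r := by
    intro n
    induction n with
    | zero => rfl
    | succ n ih => rw [pow_succ', Module.End.mul_apply, Module.End.mul_apply] at *; rw [ih, hTr]
  have hv : v = r + α • Finsupp.single a 1 + β • Finsupp.single b 1 := by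
    rw [hr]; abel
  rw [hv, map_add, map_add, map_smul, map_smul, hea, heb, hTnr]

lemma sig_liftable (M : CoxeterMatrix B) : M.IsLiftable (fun a => sig M a) := by
  intro a b
  by_cases hab : a = b
  · subst hab
    rw [M.diagonal a, pow_one]
    apply LinearMap.ext
    intro v
    rw [Module.End.mul_apply, sig_sig, Module.End.one_apply]
  · rcases Nat.eq_zero_or_pos (M a b) with h0 | hpos
    · rw [h0, pow_zero]
    · have hm2 : 2 ≤ M a b := by
        have := M.off_diagonal a b hab
        omega
      have hTT_a := T_sq_ea M a b
      have hTT_b := T_sq_eb M a b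
      have hea : ((sig M a * sig M b) ^ (M a b : ℕ)) (Finsupp.single a 1) = Finsupp.single a 1
          ∧ ((sig M a * sig M b) ^ (M a b : ℕ)) (Finsupp.single b 1) = Finsupp.single b 1 := by
        rcases eq_or_lt_of_le hm2 with h2 | h3
        · -- M a b = 2
          have hc0 : km M a b = 0 := by
            rw [km, ← h2]
            norm_num [Real.cos_pi_div_two]
          have hTea : (sig M a * sig M b) (Finsupp.single a 1) = -Finsupp.single a 1 := by
            rw [T_ea M a b, hc0]
            module
          have hTeb : (sig M a * sig M b) (Finsupp.single b 1) = -Finsupp.single b 1 := by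
            rw [T_eb M a b, hc0]
            module
          constructor
          · rw [← h2, pow_two, Module.End.mul_apply, hTea, map_neg, hTea, neg_neg]
          · rw [← h2, pow_two, Module.End.mul_apply, hTeb, map_neg, hTeb, neg_neg]
        · exact ⟨T_pow_fix M a b _ hTT_a h3 rfl, T_pow_fix M a b _ hTT_b h3 rfl⟩
      exact LinearMap.ext (T_pow_fix_all M hab (by omega) hea.1 hea.2)


/-- The geometric representation of the Coxeter system. -/
noncomputable def geo : W →* Module.End ℝ (B →₀ ℝ) :=
  cs.lift ⟨fun a => sig M a, sig_liftable M⟩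

lemma geo_simple (a : B) : geo cs (s a) = sig M a :=
  cs.lift_apply_simple (sig_liftable M) a

lemma geo_coeff (ω : List B) (k : B) (hk : k ∉ ω) :
    (geo cs (π ω)) (Finsupp.single k 1) k = 1 := by
  induction ω with
  | nil => simp
  | cons a ω ih =>
    rw [List.mem_cons, not_or] at hk
    rw [cs.wordProd_cons, map_mul, Module.End.mul_apply, geo_simple,
      sig_single_of_ne M (Ne.symm hk.1), ih hk.2]

lemma wordProd_ne_simple {ω : List B} {k : B} (hk : k ∉ ω) : π ω ≠ s k := by
  intro h
  have h1 := congrArg (fun L : Module.End ℝ (B →₀ ℝ) => L (Finsupp.single k 1) k)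
    (congrArg (geo cs) h)
  rw [geo_coeff cs ω k hk, geo_simple, sig_single_self] at h1
  rw [Finsupp.neg_apply, Finsupp.single_eq_same] at h1
  norm_num at h1

lemma simple_ne_simple {a b : B} (hab : a ≠ b) : s a ≠ s b := by
  have := wordProd_ne_simple cs (ω := [a]) (k := b) (by simp [Ne.symm hab])
  rwa [cs.wordProd_singleton] at this

lemma km_four {a b : B} (h4 : M a b = 4) : km M a b ^ 2 = 1 / 2 := by
  rw [km, h4]
  rw [show ((4:ℕ):ℝ) = 4 by norm_num, Real.cos_pi_div_four]
  rw [neg_pow, div_pow, Real.sq_sqrt (by norm_num : (2:ℝ) ≥ 0)]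
  norm_num

lemma ord4 {a b : B} (h4 : M a b = 4) : (s a * s b) ^ 2 ≠ 1 := by
  intro h
  have hab : a ≠ b := by
    intro hab
    rw [hab, M.diagonal] at h4
    omega
  have h1 := congrArg (fun w => (geo cs w) (Finsupp.single a 1) a) h
  rw [map_pow, map_mul, geo_simple, geo_simple, map_one] at h1
  have hTT := T_sq_ea M a b
  have h2 : ((sig M a * sig M b) ^ 2) (Finsupp.single a 1) = -Finsupp.single a 1 := by
    rw [pow_two, Module.End.mul_apply, hTT, km_four h4]
    rw [show (4 * (1/2 : ℝ) - 2) = 0 by norm_num, zero_smul, zero_sub]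
  rw [h2, Module.End.one_apply, Finsupp.neg_apply, Finsupp.single_eq_same] at h1
  norm_num at h1

lemma km_three {a b : B} (h3 : M a b = 3) : km M a b = -(1/2) := by
  rw [km, h3]
  rw [show ((3:ℕ):ℝ) = 3 by norm_num, Real.cos_pi_div_three]

lemma commut {a b d : B} (hab : a ≠ b) (hdb : d ≠ b) (h3 : M b d = 3) :
    s d * (s a * s b) ≠ (s a * s b) * s d := by
  intro h
  have h1 := congrArg (fun w => (geo cs w) (Finsupp.single b 1) b) h
  simp only [map_mul, geo_simple, Module.End.mul_apply] at h1
  rw [sig_single_of_ne M hdb, sig_single_of_ne M hab, sig_single_self] at h1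
  rw [Finsupp.neg_apply, Finsupp.single_eq_same] at h1
  have hd : sig M d (Finsupp.single b 1) = Finsupp.single b 1 + Finsupp.single d 1 := by
    rw [sig_apply, fform_single, km_three h3]
    module
  have hb : (sig M b (sig M d (Finsupp.single b 1))) b = 0 := by
    rw [hd, sig_apply, map_add, fform_single, fform_single, km_self, km_comm M d b,
      km_three h3]
    rw [show (2 * ((1:ℝ) + -(1/2))) = 1 by norm_num, one_smul]
    rw [Finsupp.sub_apply, Finsupp.add_apply, Finsupp.single_eq_same,
      Finsupp.single_eq_of_ne' hdb]
    norm_num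
  rw [sig_single_of_ne M hab, hb] at h1
  norm_num at h1


/-! ### Length and descent computations -/

lemma ne_of_M_ne_one {a b : B} (h : M a b ≠ 1) : a ≠ b := by
  intro hab
  rw [hab, M.diagonal] at h
  exact h rfl

lemma len_two {a b : B} (hab : a ≠ b) : ℓ (s a * s b) = 2 := by
  rcases cs.length_mul_simple (s a) b with h | h
  · rw [h, cs.length_simple]
  · exfalso
    rw [cs.length_simple] at h
    have h0 : ℓ (s a * s b) = 0 := by omega
    rw [cs.length_eq_zero_iff] at h0
    have : s a = s b := by
      have := congrArg (fun z => z * s b) h0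
      simpa [mul_assoc, cs.simple_mul_simple_self] using this
    exact simple_ne_simple cs hab this

lemma len_three {u : W} {a : B} (h2 : ℓ u = 2) (hno : ¬ cs.IsRightDescent u a) :
    ℓ (u * s a) = 3 := by
  rw [cs.not_isRightDescent_iff.mp hno, h2]

lemma lt_of_not_descent {w : W} {k : B} (h : ¬ cs.IsRightDescent w k) :
    ℓ w < ℓ (w * s k) := by
  rw [cs.not_isRightDescent_iff.mp h]
  omega

lemma mem_ris_pair {a b : B} {t : W} (h : t ∈ cs.rightInvSeq [a, b]) :
    t = s b * s a * s b ∨ t = s b := by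
  rw [ris_cons, ris_cons] at h
  simp only [cs.wordProd_singleton, cs.wordProd_nil, CoxeterSystem.rightInvSeq_nil,
    inv_one, one_mul, mul_one,
    cs.inv_simple, List.mem_cons, List.mem_singleton, List.not_mem_nil, or_false] at h
  rcases h with h | h
  · subst h; left; simp [mul_assoc]
  · right; exact h

lemma mem_ris_triple {a b c : B} {t : W} (h : t ∈ cs.rightInvSeq [a, b, c]) :
    t = s c * s b * s a * s b * s c ∨ t = s c * s b * s c ∨ t = s c := by
  rw [ris_cons, ris_cons, ris_cons] at h
  simp only [cs.wordProd_cons, cs.wordProd_singleton, cs.wordProd_nil,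
    CoxeterSystem.rightInvSeq_nil, inv_one, one_mul,
    mul_one, cs.inv_simple, mul_inv_rev, List.mem_cons, List.mem_singleton,
    List.not_mem_nil, or_false] at h
  rcases h with h | h | h
  · subst h; left; simp [mul_assoc]
  · subst h; right; left; simp [mul_assoc]
  · right; right; exact h

lemma reduced_pair {a b : B} (hab : a ≠ b) : cs.IsReduced [a, b] := by
  show ℓ (π [a, b]) = 2
  rw [cs.wordProd_cons, cs.wordProd_singleton]
  exact len_two cs hab

/-- Case (a): no right descent of `s j * s i` outside `i`. -/
lemma caseA_nodescent {i j : B} (hji : j ≠ i) (h3 : M i j = 3) {k : B} (hki : k ≠ i) :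
    ¬ cs.IsRightDescent (s j * s i) k := by
  intro hd
  have hij : i ≠ j := Ne.symm hji
  have hπ : π [j, i] = s j * s i := by rw [cs.wordProd_cons, cs.wordProd_singleton]
  have hmem := simple_mem_ris_of_isRightDescent cs hd (reduced_pair cs hji) hπ
  rcases mem_ris_pair cs hmem with h | h
  · by_cases hkj : k = j
    · subst hkj
      -- s k = s i * s j * s i leads to (s i * s j)^2 = 1, contradicting order 3
      have e1 : s k * s i = s i * s k := by
        conv_lhs => rw [h]
        rw [mul_assoc (s i * s k), cs.simple_mul_simple_self, mul_one]
      have h2 : (s i * s k) ^ 2 = 1 := by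
        rw [pow_two]
        nth_rewrite 2 [← e1]
        simp [mul_assoc, cs.simple_mul_simple_cancel_left, cs.simple_mul_simple_self]
      have h3' : (s i * s k) ^ 3 = 1 := by
        have := cs.simple_mul_simple_pow i k
        rwa [h3] at this
      rw [pow_succ, h2, one_mul] at h3'
      have : s i = s k := by
        have := congrArg (fun z => z * s k) h3'
        simpa [mul_assoc, cs.simple_mul_simple_self] using this
      exact simple_ne_simple cs hij this
    · refine wordProd_ne_simple cs (ω := [i, j, i]) (k := k) (by simp [hki, hkj]) ?_
      rw [cs.wordProd_cons, cs.wordProd_cons, cs.wordProd_singleton, ← mul_assoc]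
      exact h.symm
  · exact simple_ne_simple cs hki h


lemma sq_from_palindrome {i k : B} (h : s k = s i * s k * s i) : (s i * s k) ^ 2 = 1 := by
  have e1 : s k * s i = s i * s k := by
    conv_lhs => rw [h]
    rw [mul_assoc (s i * s k), cs.simple_mul_simple_self, mul_one]
  rw [pow_two]
  nth_rewrite 2 [← e1]
  simp [mul_assoc, cs.simple_mul_simple_cancel_left, cs.simple_mul_simple_self]

lemma caseB0 {i j : B} (hij : i ≠ j) (h4 : M i j = 4) :
    ¬ cs.IsRightDescent (s i * s j) i := by
  intro hd
  have hπ : π [i, j] = s i * s j := by rw [cs.wordProd_cons, cs.wordProd_singleton]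
  have hmem := simple_mem_ris_of_isRightDescent cs hd (reduced_pair cs hij) hπ
  rcases mem_ris_pair cs hmem with h | h
  · -- s i = s j * s i * s j
    have e1 : s i * s j = s j * s i := by
      conv_lhs => rw [h]
      rw [mul_assoc (s j * s i), cs.simple_mul_simple_self, mul_one]
    have h2 : (s i * s j) ^ 2 = 1 := by
      rw [pow_two]
      nth_rewrite 1 [e1]
      simp [mul_assoc, cs.simple_mul_simple_cancel_left, cs.simple_mul_simple_self]
    exact ord4 cs h4 h2
  · exact simple_ne_simple cs hij h

lemma caseB_len1 {i j : B} (hij : i ≠ j) (h4 : M i j = 4) : ℓ (s i * s j * s i) = 3 :=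
  len_three cs (len_two cs hij) (caseB0 cs hij h4)

lemma caseB1 {i j : B} (hij : i ≠ j) (h4 : M i j = 4) {k : B} (hki : k ≠ i) :
    ¬ cs.IsRightDescent (s i * s j * s i) k := by
  intro hd
  have hπ : π [i, j, i] = s i * s j * s i := by
    rw [cs.wordProd_cons, cs.wordProd_cons, cs.wordProd_singleton, ← mul_assoc]
  have hred : cs.IsReduced [i, j, i] := by
    show ℓ (π [i, j, i]) = 3
    rw [hπ]
    exact caseB_len1 cs hij h4
  have hmem := simple_mem_ris_of_isRightDescent cs hd hred hπ
  rcases mem_ris_triple cs hmem with h | h | h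
  · by_cases hkj : k = j
    · subst hkj
      -- s k = s i * s k * s i * s k * s i forces (s i * s k)^3 = 1, then with order 4, s i = s k
      have e1 : s k * s i = (s i * s k) * (s i * s k) := by
        conv_lhs => rw [h]
        simp [mul_assoc, cs.simple_mul_simple_cancel_left, cs.simple_mul_simple_self]
      have e2 : (s i * s k) ^ 3 = 1 := by
        rw [pow_succ, pow_two, ← e1]
        simp [mul_assoc, cs.simple_mul_simple_cancel_left, cs.simple_mul_simple_self]
      have e3 : (s i * s k) ^ 4 = 1 := by
        have := cs.simple_mul_simple_pow i k
        rwa [h4] at this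
      rw [pow_succ, e2, one_mul] at e3
      have : s i = s k := by
        have := congrArg (fun z => z * s k) e3
        simpa [mul_assoc, cs.simple_mul_simple_self] using this
      exact simple_ne_simple cs hij this
    · refine wordProd_ne_simple cs (ω := [i, j, i, j, i]) (k := k) (by simp [hki, hkj]) ?_
      simp only [cs.wordProd_cons, cs.wordProd_singleton, cs.wordProd_nil, mul_one,
        ← mul_assoc]
      exact h.symm
  · by_cases hkj : k = j
    · subst hkj
      exact ord4 cs h4 (sq_from_palindrome cs h)
    · refine wordProd_ne_simple cs (ω := [i, j, i]) (k := k) (by simp [hki, hkj]) ?_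
      simp only [cs.wordProd_cons, cs.wordProd_singleton, cs.wordProd_nil, mul_one,
        ← mul_assoc]
      exact h.symm
  · exact simple_ne_simple cs hki h

lemma caseB2a {i j l : B} (hij : i ≠ j) (hil : i ≠ l) (hlj : l ≠ j) :
    ¬ cs.IsRightDescent (s l * s j) i := by
  intro hd
  have hπ : π [l, j] = s l * s j := by rw [cs.wordProd_cons, cs.wordProd_singleton]
  have hmem := simple_mem_ris_of_isRightDescent cs hd (reduced_pair cs hlj) hπ
  rcases mem_ris_pair cs hmem with h | h
  · refine wordProd_ne_simple cs (ω := [j, l, j]) (k := i) (by simp [hij, hil]) ?_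
    simp only [cs.wordProd_cons, cs.wordProd_singleton, cs.wordProd_nil, mul_one,
      ← mul_assoc]
    exact h.symm
  · exact simple_ne_simple cs hij h

lemma caseB_len2 {i j l : B} (hij : i ≠ j) (hil : i ≠ l) (hlj : l ≠ j) :
    ℓ (s l * s j * s i) = 3 :=
  len_three cs (len_two cs hlj) (caseB2a cs hij hil hlj)

lemma caseB2 {i j l : B} (hij : i ≠ j) (hil : i ≠ l) (hlj : l ≠ j)
    (h4 : M i j = 4) (h3 : M j l = 3) {k : B} (hki : k ≠ i) :
    ¬ cs.IsRightDescent (s l * s j * s i) k := by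
  intro hd
  have hπ : π [l, j, i] = s l * s j * s i := by
    rw [cs.wordProd_cons, cs.wordProd_cons, cs.wordProd_singleton, ← mul_assoc]
  have hred : cs.IsReduced [l, j, i] := by
    show ℓ (π [l, j, i]) = 3
    rw [hπ]
    exact caseB_len2 cs hij hil hlj
  have hmem := simple_mem_ris_of_isRightDescent cs hd hred hπ
  rcases mem_ris_triple cs hmem with h | h | h
  · -- s k = s i * s j * s l * s j * s i
    by_cases hkj : k = j
    · subst hkj
      -- then s l = s k * s i * s k * s i * s k, impossible as l ∉ {i, k}
      have e := congrArg (fun z => (s k * s i) * z * (s i * s k)) h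
      simp only [mul_assoc, cs.simple_mul_simple_cancel_left,
        cs.simple_mul_simple_self, mul_one] at e
      refine wordProd_ne_simple cs (ω := [k, i, k, i, k]) (k := l)
        (by simp [hlj, Ne.symm hil]) ?_
      simp only [cs.wordProd_cons, cs.wordProd_singleton, cs.wordProd_nil, mul_one]
      exact e
    · by_cases hkl : k = l
      · subst hkl
        -- s k commutes with s i * s j, contradicting M j l = 3
        have e := congrArg (fun z => z * (s i * s j)) h
        simp only [mul_assoc, cs.simple_mul_simple_cancel_left,
          cs.simple_mul_simple_self, mul_one] at e
        refine commut cs hij hlj h3 ?_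
        rw [mul_assoc]
        simpa [mul_assoc] using e
      · refine wordProd_ne_simple cs (ω := [i, j, l, j, i]) (k := k)
          (by simp [hki, hkj, hkl]) ?_
        simp only [cs.wordProd_cons, cs.wordProd_singleton, cs.wordProd_nil, mul_one,
          ← mul_assoc]
        exact h.symm
  · by_cases hkj : k = j
    · subst hkj
      exact ord4 cs h4 (sq_from_palindrome cs h)
    · refine wordProd_ne_simple cs (ω := [i, j, i]) (k := k) (by simp [hki, hkj]) ?_
      simp only [cs.wordProd_cons, cs.wordProd_singleton, cs.wordProd_nil, mul_one,
        ← mul_assoc]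
      exact h.symm
  · exact simple_ne_simple cs hki h

end Stmt18

/-- Let `W` be a finite Coxeter group with simple reflections indexed by a Coxeter graph, and
let `W'` be the standard parabolic subgroup generated by all simple reflections except `sᵢ`.
If the Coxeter graph contains either (a) a vertex `i` with two distinct neighbours joined to
`i` by single bonds (`m(i,j) = m(i,j') = 3`, a path through `i`, covering the branch
configurations of types `A`/`D`/`E`), or (b) a double bond at `i` followed by a single bond
(`m(i,j) = 4`, `m(j,l) = 3`, as in types `B`/`F`), then the set of minimal length coset
representatives of `W'` in `W` contains two distinct elements of equal length. -/
theorem stmt18 {B W : Type*} [Group W] [Finite W]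
    (M : CoxeterMatrix B) (cs : CoxeterSystem M W) (i : B)
    (hconf : (∃ j j' : B, j ≠ j' ∧ j ≠ i ∧ j' ≠ i ∧ M i j = 3 ∧ M i j' = 3) ∨
      (∃ j l : B, j ≠ i ∧ l ≠ i ∧ l ≠ j ∧ M i j = 4 ∧ M j l = 3)) :
    ∃ w w' : W, w ≠ w' ∧ cs.length w = cs.length w' ∧
      (∀ j : B, j ≠ i → cs.length w < cs.length (w * cs.simple j)) ∧
      (∀ j : B, j ≠ i → cs.length w' < cs.length (w' * cs.simple j)) := by
  classical
  rcases hconf with ⟨j, j', hjj', hji, hj'i, h3, h3'⟩ | ⟨j, l, hji, hli, hlj, h4, h3⟩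
  · refine ⟨cs.simple j * cs.simple i, cs.simple j' * cs.simple i, ?_, ?_, ?_, ?_⟩
    · intro h
      exact Stmt18.simple_ne_simple cs hjj' (mul_right_cancel h)
    · rw [Stmt18.len_two cs hji, Stmt18.len_two cs hj'i]
    · intro k hki
      exact Stmt18.lt_of_not_descent cs (Stmt18.caseA_nodescent cs hji h3 hki)
    · intro k hki
      exact Stmt18.lt_of_not_descent cs (Stmt18.caseA_nodescent cs hj'i h3' hki)
  · have hij : i ≠ j := Ne.symm hji
    have hil : i ≠ l := Ne.symm hli
    refine ⟨cs.simple l * cs.simple j * cs.simple i,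
      cs.simple i * cs.simple j * cs.simple i, ?_, ?_, ?_, ?_⟩
    · intro h
      exact Stmt18.simple_ne_simple cs hli (mul_right_cancel (mul_right_cancel h))
    · rw [Stmt18.caseB_len2 cs hij hil hlj, Stmt18.caseB_len1 cs hij h4]
    · intro k hki
      exact Stmt18.lt_of_not_descent cs (Stmt18.caseB2 cs hij hil hlj h4 h3 hki)
    · intro k hki
      exact Stmt18.lt_of_not_descent cs (Stmt18.caseB1 cs hij h4 hki)
end
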